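/- arXiv:2210.14247 — 2 statements merged into one kernel-verified Lean document; each statement's English description precedes it below -/
import Mathlib

section
/- For all ℕ₀-matrix compositions a of size m×n and b of size s×t: M_a · M_b = Σ_{j,k≥1} Σ_{p ∈ qSh(m,s;j), q ∈ qSh(n,t;k)} M_{c^{p,q}}, where c^{p,q} is the j×k matrix with entries c^{p,q}_{x,y} := Σ_{u∈p⁻¹(x), v∈q⁻¹(y)} diag(a,b)_{u,v} ∈ ℕ₀. In particular, QSym is an R-subalgebra of the R-algebra of finite-degree formal power series in the variables x_{i,j}. -/
open scoped Classical

namespace TwoParam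

/-! ### The free commutative monoid on `d` generators, written additively -/

abbrev Md (d : ℕ) := Fin d →₀ ℕ

/-! ### Raw matrices over `Md d` and matrix compositions

A raw matrix is a function `ℕ → ℕ → Md d` together with a number of rows and
columns, normalized to be `0` (= the neutral element `ε`) outside the range.
The empty composition is the `0 × 0` matrix. -/

structure RawMat (d : ℕ) where
  rows : ℕ
  cols : ℕ
  entry : ℕ → ℕ → Md d
  entry_eq_zero : ∀ i j : ℕ, rows ≤ i ∨ cols ≤ j → entry i j = 0

namespace RawMat

variable {d : ℕ}

/-- A matrix composition: no row and no column consists entirely of `ε`.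
(The empty `0 × 0` matrix vacuously satisfies this.) -/
def IsComp (a : RawMat d) : Prop :=
  (∀ i < a.rows, ∃ j < a.cols, a.entry i j ≠ 0) ∧
  (∀ j < a.cols, ∃ i < a.rows, a.entry i j ≠ 0)

/-- The empty composition. -/
def empty (d : ℕ) : RawMat d := ⟨0, 0, fun _ _ => 0, fun _ _ _ => rfl⟩

/-- Diagonal block concatenation of two matrices. -/
def diag (a b : RawMat d) : RawMat d where
  rows := a.rows + b.rows
  cols := a.cols + b.cols
  entry := fun i j =>
    if i < a.rows ∧ j < a.cols then a.entry i j
    else if a.rows ≤ i ∧ a.cols ≤ j then b.entry (i - a.rows) (j - a.cols)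
    else 0
  entry_eq_zero := by
    intro i j h
    try dsimp only
    split_ifs with h1 h2
    · exact absurd h (by omega)
    · exact b.entry_eq_zero _ _ (by omega)
    · rfl

/-- A non-empty composition is connected if it admits no nontrivial
block-diagonal decomposition into compositions. -/
def Connected (a : RawMat d) : Prop :=
  a.IsComp ∧ a ≠ empty d ∧
    ∀ b c : RawMat d, b.IsComp → c.IsComp → a = b.diag c →
      b = empty d ∨ c = empty d

/-- Total weight of a matrix: the homomorphism `Md d → ℕ` sending every
generator to `1`, summed over all entries. -/
def weight (a : RawMat d) : ℕ :=
  ∑ i ∈ Finset.range a.rows, ∑ j ∈ Finset.range a.cols,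
    (a.entry i j).sum fun _ e => e

end RawMat

/-! ### Evaluation of monomials -/

/-- For `z ∈ R^d` and `m ∈ Md d`, the evaluation `z^(m) = ∏ j, z j ^ m j`. -/
def evalMon {d : ℕ} {R : Type*} [CommRing R] (z : Fin d → R) (m : Md d) : R :=
  m.prod fun j e => z j ^ e

/-! ### Two-parameter sums signature -/

/-- Strictly increasing chains of length `m` with values in `[lo, hi)`
(0-based indexing of the data). -/
noncomputable def chainsB (m lo hi : ℕ) : Finset (Fin m → ℕ) :=
  (Fintype.piFinset fun _ : Fin m => Finset.Ico lo hi).filter StrictMono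

/-- The bounded two-parameter sums signature coefficient `⟨SS_{l;r}(Z), a⟩`. -/
noncomputable def SSb {d : ℕ} {R : Type*} [CommRing R]
    (Z : ℕ × ℕ → Fin d → R) (l r : ℕ × ℕ) (a : RawMat d) : R :=
  ∑ ι ∈ chainsB a.rows l.1 r.1, ∑ κ ∈ chainsB a.cols l.2 r.2,
    ∏ s : Fin a.rows, ∏ t : Fin a.cols, evalMon (Z (ι s, κ t)) (a.entry s t)

/-- The (unbounded) two-parameter sums signature coefficient `⟨SS(Z), a⟩`,
for finitely supported `Z` a finite sum. -/
noncomputable def SSc {d : ℕ} {R : Type*} [CommRing R]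
    (Z : ℕ × ℕ → Fin d → R) (a : RawMat d) : R :=
  ∑ᶠ ι ∈ {f : Fin a.rows → ℕ | StrictMono f},
    ∑ᶠ κ ∈ {g : Fin a.cols → ℕ | StrictMono g},
      ∏ s : Fin a.rows, ∏ t : Fin a.cols, evalMon (Z (ι s, κ t)) (a.entry s t)

/-! ### Quasi-shuffle surjections -/

/-- `qShSet m s j`: surjections `{1,…,m+s} ↠ {1,…,j}` that are strictly
increasing on the first `m` and on the last `s` arguments. -/
noncomputable def qShSet (m s j : ℕ) : Finset (Fin (m + s) → Fin j) :=
  Finset.univ.filter fun q =>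
    Function.Surjective q ∧
    (∀ u v : Fin (m + s), u < v → (v : ℕ) < m → q u < q v) ∧
    (∀ u v : Fin (m + s), u < v → m ≤ (u : ℕ) → q u < q v)

/-- The summand `c^{p,q}` of the two-parameter quasi-shuffle: the `j × k`
matrix with entries `⋆_{u ∈ p⁻¹(x), v ∈ q⁻¹(y)} diag(a,b)_{u,v}`. -/
noncomputable def qshMat {d : ℕ} (a b : RawMat d) {j k : ℕ}
    (p : Fin (a.rows + b.rows) → Fin j) (q : Fin (a.cols + b.cols) → Fin k) :
    RawMat d where
  rows := j
  cols := k
  entry := fun x y =>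
    if hx : x < j then
      if hy : y < k then
        ∑ u ∈ Finset.univ.filter (fun u => p u = ⟨x, hx⟩),
          ∑ v ∈ Finset.univ.filter (fun v => q v = ⟨y, hy⟩),
            (a.diag b).entry u v
      else 0
    else 0
  entry_eq_zero := by
    intro x y h
    try dsimp only
    split_ifs with hx hy
    · exact absurd h (by omega)
    · rfl
    · rfl

/-- The two-parameter quasi-shuffle `a ⧢ b`, as an element of the free
`R`-module on matrices.  (The empty index sets for `j` or `k` outside
`[0, rows+rows]` resp. `[0, cols+cols]` implement the conventions
`e ⧢ a = a ⧢ e = a` and `e ⧢ e = e`.) -/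
noncomputable def qsh {d : ℕ} (R : Type*) [CommRing R] (a b : RawMat d) :
    RawMat d →₀ R :=
  ∑ j ∈ Finset.range (a.rows + b.rows + 1),
    ∑ k ∈ Finset.range (a.cols + b.cols + 1),
      ∑ p ∈ qShSet a.rows b.rows j,
        ∑ q ∈ qShSet a.cols b.cols k,
          Finsupp.single (qshMat a b p q) 1

/-- Bilinear extension of the quasi-shuffle to the free module. -/
noncomputable def qshL {d : ℕ} {R : Type*} [CommRing R]
    (F G : RawMat d →₀ R) : RawMat d →₀ R :=
  F.sum fun a ra => G.sum fun b rb => (ra * rb) • qsh R a b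

/-! ### Two-parameter data: eventually zero / eventually constant functions -/

variable {V : Type*}

/-- Eventually zero two-parameter data: finite support. -/
def EvZ [Zero V] (X : ℕ × ℕ → V) : Prop := (Function.support X).Finite

/-- Eventually constant two-parameter data: there is a box outside of which
`X` is constant; i.e. whenever two values differ, one of the two indices lies
in the box. -/
def EvC (X : ℕ × ℕ → V) : Prop :=
  ∃ n : ℕ × ℕ, ∀ i j : ℕ × ℕ, X i ≠ X j →
    (i.1 ≤ n.1 ∧ i.2 ≤ n.2) ∨ (j.1 ≤ n.1 ∧ j.2 ≤ n.2)

/-- The coordinate of `i` along the axis `a` (axis `0` = rows, `1` = cols). -/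
def axC (a : Fin 2) (i : ℕ × ℕ) : ℕ := if a = 0 then i.1 else i.2

/-- Shift an index one step down along the axis `a`. -/
def shiftD (a : Fin 2) (i : ℕ × ℕ) : ℕ × ℕ :=
  if a = 0 then (i.1 - 1, i.2) else (i.1, i.2 - 1)

/-- The zero insertion operator (0-based position `k`): insert a zero
row/column at position `k` along axis `a`. -/
def zeroIns [Zero V] (a : Fin 2) (k : ℕ) (X : ℕ × ℕ → V) : ℕ × ℕ → V :=
  fun i => if axC a i < k then X i else if axC a i = k then 0 else X (shiftD a i)

/-- The warping operator (0-based position `k`): duplicate the row/column at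
position `k` along axis `a`. -/
def warp (a : Fin 2) (k : ℕ) (X : ℕ × ℕ → V) : ℕ × ℕ → V :=
  fun i => if axC a i ≤ k then X i else X (shiftD a i)

/-- The two-parameter (forward) difference operator `δ`. -/
def diffOp [AddCommGroup V] (X : ℕ × ℕ → V) : ℕ × ℕ → V := fun i =>
  X (i.1 + 1, i.2 + 1) - X (i.1 + 1, i.2) - X (i.1, i.2 + 1) + X (i.1, i.2)

/-- The summation operator `ς`, a right inverse of `δ`:
`(ς Z)_{i,j} = Σ_{s ≥ i} Σ_{t ≥ j} Z_{s,t}`. -/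
noncomputable def sigmaOp [AddCommMonoid V] (Z : ℕ × ℕ → V) : ℕ × ℕ → V :=
  fun i => ∑ᶠ p ∈ {p : ℕ × ℕ | i.1 ≤ p.1 ∧ i.2 ≤ p.2}, Z p

/-- The set of all `n ∈ ℕ²` such that `X` is determined inside the
`n.1 × n.2` upper-left box (0-based size/count convention). -/
def sizeSetC (X : ℕ × ℕ → V) : Set (ℕ × ℕ) :=
  {n | ∀ i j : ℕ × ℕ, X i ≠ X j →
    (i.1 < n.1 ∧ i.2 < n.2) ∨ (j.1 < n.1 ∧ j.2 < n.2)}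

/-- `rows(X)` for eventually constant `X`: first component of the least
element of `sizeSetC X`. -/
noncomputable def rowsC (X : ℕ × ℕ → V) : ℕ := sInf (Prod.fst '' sizeSetC X)

/-- `cols(X)` for eventually constant `X`. -/
noncomputable def colsC (X : ℕ × ℕ → V) : ℕ := sInf (Prod.snd '' sizeSetC X)

/-- `rows(Z)` for eventually zero `Z`, defined via the support. -/
noncomputable def rowsZ [Zero V] (Z : ℕ × ℕ → V) : ℕ :=
  sInf {m : ℕ | ∀ i : ℕ × ℕ, Z i ≠ 0 → i.1 < m}

/-- `cols(Z)` for eventually zero `Z`, defined via the support. -/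
noncomputable def colsZ [Zero V] (Z : ℕ × ℕ → V) : ℕ :=
  sInf {m : ℕ | ∀ i : ℕ × ℕ, Z i ≠ 0 → i.2 < m}

/-- Diagonal concatenation `A ⊘ B` on eventually zero functions,
with `rows`/`cols` taken in the eventually-constant sense. -/
noncomputable def dconc [AddCommGroup V] (A B : ℕ × ℕ → V) : ℕ × ℕ → V :=
  A + (zeroIns 0 0)^[rowsC A] ((zeroIns 1 0)^[colsC A] B)

/-- Diagonal concatenation `A ⊘ B` on eventually zero functions,
with `rows`/`cols` taken in the support sense. -/
noncomputable def dconcZ [AddCommGroup V] (A B : ℕ × ℕ → V) : ℕ × ℕ → V :=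
  A + (zeroIns 0 0)^[rowsZ A] ((zeroIns 1 0)^[colsZ A] B)

/-- Concatenation along the diagonal `X ⊠ Y` on eventually constant
functions: `ς(δX) + Warp_{1,1}^{rows X}(Warp_{2,1}^{cols X}(Y))`. -/
noncomputable def bconc [AddCommGroup V] (X Y : ℕ × ℕ → V) : ℕ × ℕ → V :=
  sigmaOp (diffOp X) + (warp 0 0)^[rowsC X] ((warp 1 0)^[colsC X] Y)


/-! ### Two-parameter quasisymmetric functions -/

/-- Monomials in the commuting variables `x_{i,j}`, `(i,j) ∈ ℕ × ℕ`. -/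
abbrev Mon := (ℕ × ℕ) →₀ ℕ

/-- Total degree of a monomial. -/
def mdeg (m : Mon) : ℕ := m.sum fun _ e => e

/-- A formal power series (given by its coefficient function) has finite
total degree. -/
def FinDeg {R : Type*} [Zero R] (f : Mon → R) : Prop :=
  ∃ D : ℕ, ∀ m : Mon, f m ≠ 0 → mdeg m ≤ D

/-- `ℕ₀`-valued raw matrices, normalized to vanish outside the range. -/
structure NMat where
  rows : ℕ
  cols : ℕ
  entry : ℕ → ℕ → ℕ
  entry_eq_zero : ∀ i j : ℕ, rows ≤ i ∨ cols ≤ j → entry i j = 0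

namespace NMat

/-- An `ℕ₀`-matrix composition: no zero row and no zero column. -/
def IsComp (a : NMat) : Prop :=
  (∀ i < a.rows, ∃ j < a.cols, a.entry i j ≠ 0) ∧
  (∀ j < a.cols, ∃ i < a.rows, a.entry i j ≠ 0)

/-- The empty composition. -/
def empty : NMat := ⟨0, 0, fun _ _ => 0, fun _ _ _ => rfl⟩

/-- Diagonal block concatenation. -/
def diag (a b : NMat) : NMat where
  rows := a.rows + b.rows
  cols := a.cols + b.cols
  entry := fun i j =>
    if i < a.rows ∧ j < a.cols then a.entry i j
    else if a.rows ≤ i ∧ a.cols ≤ j then b.entry (i - a.rows) (j - a.cols)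
    else 0
  entry_eq_zero := by
    intro i j h
    try dsimp only
    split_ifs with h1 h2
    · exact absurd h (by omega)
    · exact b.entry_eq_zero _ _ (by omega)
    · rfl

end NMat

/-- The monomial `∏_{s,t} x_{ι_s, κ_t}^{a_{s,t}}` attached to a matrix `a`
and chains `ι`, `κ`. -/
noncomputable def monomialOf (a : NMat) (ι : Fin a.rows → ℕ) (κ : Fin a.cols → ℕ) : Mon :=
  ∑ s : Fin a.rows, ∑ t : Fin a.cols, Finsupp.single (ι s, κ t) (a.entry s t)

/-- The monomial quasisymmetric function `M_a` (as a coefficient function):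
each monomial `∏ x_{ι_s,κ_t}^{a_{s,t}}` for strictly increasing chains occurs
with coefficient `1`.  In particular `M_e = 1`. -/
noncomputable def monQ {R : Type*} [CommRing R] (a : NMat) : Mon → R := fun m =>
  if ∃ (ι : Fin a.rows → ℕ) (κ : Fin a.cols → ℕ),
      StrictMono ι ∧ StrictMono κ ∧ m = monomialOf a ι κ
  then 1 else 0

/-- Two-parameter quasisymmetric function: finite degree, and for every
matrix composition `a` and all strictly increasing chains `ι`, `κ`, the
coefficients of `∏ x_{ι_s,κ_t}^{a_{s,t}}` and of `∏ x_{s,t}^{a_{s,t}}`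
coincide. -/
def IsQSym {R : Type*} [CommRing R] (f : Mon → R) : Prop :=
  FinDeg f ∧ ∀ a : NMat, a.IsComp →
    ∀ (ι : Fin a.rows → ℕ) (κ : Fin a.cols → ℕ), StrictMono ι → StrictMono κ →
      f (monomialOf a ι κ) =
        f (monomialOf a (fun s => (s : ℕ)) (fun t => (t : ℕ)))

/-- Product of formal power series (Cauchy product of coefficient
functions). -/
noncomputable def mulF {R : Type*} [CommRing R] (f g : Mon → R) : Mon → R :=
  fun m => ∑ p ∈ Finset.HasAntidiagonal.antidiagonal m, f p.1 * g p.2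

/-- Two-parameter quasisymmetric functions form an `R`-submodule of the
module of coefficient functions. -/
noncomputable def QSymSub (R : Type*) [CommRing R] : Submodule R (Mon → R) where
  carrier := {f | IsQSym f}
  add_mem' := by
    rintro f g ⟨⟨Df, hDf⟩, hf⟩ ⟨⟨Dg, hDg⟩, hg⟩
    refine ⟨⟨max Df Dg, ?_⟩, ?_⟩
    · intro m hm
      by_contra hc
      push_neg at hc
      have h1 : f m = 0 := by
        by_contra h
        have := hDf m h
        omega
      have h2 : g m = 0 := by
        by_contra h
        have := hDg m h
        omega
      apply hm
      show f m + g m = 0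
      rw [h1, h2, add_zero]
    · intro a ha ι κ hι hκ
      show f _ + g _ = f _ + g _
      rw [hf a ha ι κ hι hκ, hg a ha ι κ hι hκ]
  zero_mem' := ⟨⟨0, fun _ hm => absurd rfl hm⟩, fun _ _ _ _ _ _ => rfl⟩
  smul_mem' := by
    rintro c f ⟨⟨Df, hDf⟩, hf⟩
    refine ⟨⟨Df, ?_⟩, ?_⟩
    · intro m hm
      apply hDf
      intro h
      apply hm
      show c • f m = 0
      rw [h, smul_zero]
    · intro a ha ι κ hι hκ
      show c • f _ = c • f _
      rw [hf a ha ι κ hι hκ]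

/-- Index shift used by the free analogue of zero insertion: indices with
coordinate `≥ k` along axis `a` are shifted up by one (axis `0` = rows). -/
def liftIdx (a : Fin 2) (k : ℕ) (i : ℕ × ℕ) : ℕ × ℕ :=
  if a = 0 then (if i.1 < k then i else (i.1 + 1, i.2))
  else (if i.2 < k then i else (i.1, i.2 + 1))

/-- The free analogue of zero insertion on formal power series: the algebra
endomorphism sending `x_i ↦ x_i` for `i_a < k`, `x_i ↦ 0` for `i_a = k` and
`x_i ↦ x_{i - e_a}` for `i_a > k` (0-based position `k`).  On coefficient
functions it is given by precomposition with the index lift. -/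
noncomputable def zeroF {R : Type*} [CommRing R] (a : Fin 2) (k : ℕ)
    (f : Mon → R) : Mon → R :=
  fun m => f (m.mapDomain (liftIdx a k))

/-- The quasi-shuffle summand `c^{p,q}` for `ℕ₀`-matrices. -/
noncomputable def nQshMat (a b : NMat) {j k : ℕ}
    (p : Fin (a.rows + b.rows) → Fin j) (q : Fin (a.cols + b.cols) → Fin k) :
    NMat where
  rows := j
  cols := k
  entry := fun x y =>
    if hx : x < j then
      if hy : y < k then
        ∑ u ∈ Finset.univ.filter (fun u => p u = ⟨x, hx⟩),
          ∑ v ∈ Finset.univ.filter (fun v => q v = ⟨y, hy⟩),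
            (a.diag b).entry u v
      else 0
    else 0
  entry_eq_zero := by
    intro x y h
    try dsimp only
    split_ifs with hx hy
    · exact absurd h (by omega)
    · rfl
    · rfl

/-- One-dimensional two-parameter sums signature coefficient `⟨SS(Z), a⟩`. -/
noncomputable def SScN {K : Type*} [CommRing K] (Z : ℕ × ℕ → K) (a : NMat) : K :=
  ∑ᶠ ι ∈ {f : Fin a.rows → ℕ | StrictMono f},
    ∑ᶠ κ ∈ {g : Fin a.cols → ℕ | StrictMono g},
      ∏ s : Fin a.rows, ∏ t : Fin a.cols, Z (ι s, κ t) ^ a.entry s t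

/-- Evaluation of a formal power series at finitely supported data. -/
noncomputable def evalSeries {K : Type*} [CommRing K] (f : Mon → K)
    (Z : ℕ × ℕ → K) : K :=
  ∑ᶠ m : Mon, f m * m.prod fun i e => Z i ^ e

end TwoParam


namespace TwoParamAux

/-- `nth s i`: the `i`-th smallest element of `s` (0-based), extended strictly
monotonically by junk values beyond `s.card`. -/
noncomputable def nth (s : Finset ℕ) (i : ℕ) : ℕ :=
  if h : i < s.card then ((s.orderIsoOfFin rfl) ⟨i, h⟩ : ℕ) else s.sup id + 1 + i

/-- `idx s r`: the index of `r` in `s` (junk `0` if `r ∉ s`). -/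
noncomputable def idx (s : Finset ℕ) (r : ℕ) : ℕ :=
  if h : r ∈ s then ((s.orderIsoOfFin rfl).symm ⟨r, h⟩ : ℕ) else 0

lemma nth_eq_emb (s : Finset ℕ) (i : ℕ) (h : i < s.card) :
    nth s i = s.orderEmbOfFin rfl ⟨i, h⟩ := by
  rw [nth, dif_pos h, Finset.coe_orderIsoOfFin_apply]

lemma nth_mem (s : Finset ℕ) (i : ℕ) (h : i < s.card) : nth s i ∈ s := by
  rw [nth_eq_emb s i h]; exact Finset.orderEmbOfFin_mem s rfl _

lemma nth_of_ge (s : Finset ℕ) (i : ℕ) (h : ¬ i < s.card) :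
    nth s i = s.sup id + 1 + i := by rw [nth, dif_neg h]

lemma nth_strictMono (s : Finset ℕ) : StrictMono (nth s) := by
  intro i j hij
  by_cases hi : i < s.card
  · by_cases hj : j < s.card
    · rw [nth_eq_emb s i hi, nth_eq_emb s j hj]
      exact (s.orderEmbOfFin rfl).strictMono (by exact hij)
    · rw [nth_of_ge s j hj]
      have : nth s i ≤ s.sup id := Finset.le_sup (f := id) (nth_mem s i hi)
      omega
  · have hj : ¬ j < s.card := by omega
    rw [nth_of_ge s i hi, nth_of_ge s j hj]
    omega

lemma idx_lt_card (s : Finset ℕ) (r : ℕ) (h : r ∈ s) : idx s r < s.card := by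
  rw [idx, dif_pos h]
  exact ((s.orderIsoOfFin rfl).symm ⟨r, h⟩).isLt

lemma idx_lt (s : Finset ℕ) (h : 0 < s.card) (r : ℕ) : idx s r < s.card := by
  by_cases hr : r ∈ s
  · exact idx_lt_card s r hr
  · rw [idx, dif_neg hr]; exact h

lemma nth_idx (s : Finset ℕ) (r : ℕ) (h : r ∈ s) : nth s (idx s r) = r := by
  rw [idx, dif_pos h, nth, dif_pos (((s.orderIsoOfFin rfl).symm ⟨r, h⟩)).isLt]
  have : (⟨((s.orderIsoOfFin rfl).symm ⟨r, h⟩ : ℕ), _⟩ : Fin s.card)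
      = (s.orderIsoOfFin rfl).symm ⟨r, h⟩ := rfl
  rw [this, OrderIso.apply_symm_apply]

lemma idx_nth (s : Finset ℕ) (i : ℕ) (h : i < s.card) : idx s (nth s i) = i := by
  have hm : nth s i ∈ s := nth_mem s i h
  rw [idx, dif_pos hm]
  have : (⟨nth s i, hm⟩ : {x // x ∈ s}) = (s.orderIsoOfFin rfl) ⟨i, h⟩ := by
    ext
    exact (nth_eq_emb s i h).trans (Finset.coe_orderIsoOfFin_apply s rfl _).symm
  rw [this, OrderIso.symm_apply_apply]

lemma idx_lt_idx (s : Finset ℕ) {r r' : ℕ} (hr : r ∈ s) (hr' : r' ∈ s)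
    (h : r < r') : idx s r < idx s r' := by
  rcases lt_trichotomy (idx s r) (idx s r') with h1 | h1 | h1
  · exact h1
  · exfalso
    have e1 := nth_idx s r hr
    rw [h1] at e1
    have e2 := nth_idx s r' hr'
    omega
  · have := nth_strictMono s h1
    rw [nth_idx s r' hr', nth_idx s r hr] at this
    omega

lemma card_image_strictMono {k : ℕ} {f : Fin k → ℕ} (hf : StrictMono f) :
    (Finset.image f Finset.univ).card = k := by
  rw [Finset.card_image_of_injective _ hf.injective, Finset.card_univ, Fintype.card_fin]

lemma nth_image_strictMono {k : ℕ} {f : Fin k → ℕ} (hf : StrictMono f)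
    (i : ℕ) (h : i < k) : nth (Finset.image f Finset.univ) i = f ⟨i, h⟩ := by
  set s := Finset.image f Finset.univ with hs
  have hc : s.card = k := card_image_strictMono hf
  have h1 : f = ⇑(s.orderEmbOfFin hc) :=
    Finset.orderEmbOfFin_unique hc (fun x => Finset.mem_image_of_mem f (Finset.mem_univ x)) hf
  have h2 : (fun i : Fin s.card => (s.orderEmbOfFin hc) ⟨(i : ℕ), by omega⟩)
      = ⇑(s.orderEmbOfFin rfl) := by
    refine Finset.orderEmbOfFin_unique rfl (fun x => Finset.orderEmbOfFin_mem s hc _) ?_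
    intro x y hxy
    exact (s.orderEmbOfFin hc).strictMono (by exact hxy)
  have hi : i < s.card := by omega
  rw [nth_eq_emb s i hi, ← h2]
  simp only [h1]

end TwoParamAux
namespace TwoParam
open Finset TwoParamAux

/-! ### Support rows/cols and packing of monomials -/

noncomputable def rowsF (m : Mon) : Finset ℕ := m.support.image Prod.fst
noncomputable def colsF (m : Mon) : Finset ℕ := m.support.image Prod.snd

lemma support_add_nat (m1 m2 : Mon) : (m1 + m2).support = m1.support ∪ m2.support := by
  ext z
  simp only [Finsupp.mem_support_iff, Finset.mem_union, Finsupp.add_apply]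
  omega

lemma rowsF_add (m1 m2 : Mon) : rowsF (m1 + m2) = rowsF m1 ∪ rowsF m2 := by
  rw [rowsF, rowsF, rowsF, support_add_nat, Finset.image_union]

lemma colsF_add (m1 m2 : Mon) : colsF (m1 + m2) = colsF m1 ∪ colsF m2 := by
  rw [colsF, colsF, colsF, support_add_nat, Finset.image_union]

lemma apply_eq_zero_of_not_mem_rowsF (m : Mon) (r c : ℕ) (h : r ∉ rowsF m) :
    m (r, c) = 0 := by
  by_contra hc
  exact h (Finset.mem_image_of_mem Prod.fst (Finsupp.mem_support_iff.mpr hc))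

lemma apply_eq_zero_of_not_mem_colsF (m : Mon) (r c : ℕ) (h : c ∉ colsF m) :
    m (r, c) = 0 := by
  by_contra hc
  exact h (Finset.mem_image_of_mem Prod.snd (Finsupp.mem_support_iff.mpr hc))

/-- Packing: the matrix composition attached to a monomial. -/
noncomputable def pack (m : Mon) : NMat where
  rows := (rowsF m).card
  cols := (colsF m).card
  entry := fun i j =>
    if i < (rowsF m).card ∧ j < (colsF m).card then
      m (nth (rowsF m) i, nth (colsF m) j) else 0
  entry_eq_zero := by
    intro i j h
    try dsimp only
    rw [if_neg (by omega)]

lemma NMat.ext' {a b : NMat} (h1 : a.rows = b.rows) (h2 : a.cols = b.cols)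
    (h3 : ∀ i j, a.entry i j = b.entry i j) : a = b := by
  cases a; cases b
  simp only [NMat.mk.injEq]
  exact ⟨h1, h2, funext fun i => funext fun j => h3 i j⟩

lemma pack_rows (m : Mon) : (pack m).rows = (rowsF m).card := rfl
lemma pack_cols (m : Mon) : (pack m).cols = (colsF m).card := rfl
lemma pack_entry (m : Mon) (i j : ℕ) (hi : i < (rowsF m).card) (hj : j < (colsF m).card) :
    (pack m).entry i j = m (nth (rowsF m) i, nth (colsF m) j) := if_pos ⟨hi, hj⟩

/-! ### Values of `monomialOf` -/

lemma monomialOf_apply (a : NMat) (ι : Fin a.rows → ℕ) (κ : Fin a.cols → ℕ) (z : ℕ × ℕ) :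
    monomialOf a ι κ z =
      ∑ s : Fin a.rows, ∑ t : Fin a.cols,
        if (ι s, κ t) = z then a.entry s t else 0 := by
  rw [monomialOf, Finsupp.finset_sum_apply]
  refine Finset.sum_congr rfl fun s _ => ?_
  rw [Finsupp.finset_sum_apply]
  refine Finset.sum_congr rfl fun t _ => ?_
  exact Finsupp.single_apply

lemma monomialOf_apply_mem (a : NMat) {ι : Fin a.rows → ℕ} {κ : Fin a.cols → ℕ}
    (hι : Function.Injective ι) (hκ : Function.Injective κ) (s : Fin a.rows) (t : Fin a.cols) :
    monomialOf a ι κ (ι s, κ t) = a.entry s t := by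
  rw [monomialOf_apply]
  rw [Finset.sum_eq_single s]
  · rw [Finset.sum_eq_single t]
    · rw [if_pos rfl]
    · intro t' _ ht'
      rw [if_neg]
      intro hc
      exact ht' (hκ (congrArg Prod.snd hc))
    · intro h; exact absurd (Finset.mem_univ t) h
  · intro s' _ hs'
    apply Finset.sum_eq_zero
    intro t' _
    rw [if_neg]
    intro hc
    exact hs' (hι (congrArg Prod.fst hc))
  · intro h; exact absurd (Finset.mem_univ s) h

lemma monomialOf_apply_notin (a : NMat) (ι : Fin a.rows → ℕ) (κ : Fin a.cols → ℕ)
    (r c : ℕ) (h : (∀ s, ι s ≠ r) ∨ ∀ t, κ t ≠ c) :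
    monomialOf a ι κ (r, c) = 0 := by
  rw [monomialOf_apply]
  apply Finset.sum_eq_zero
  intro s _
  apply Finset.sum_eq_zero
  intro t _
  rw [if_neg]
  intro hc
  rcases h with h | h
  · exact h s (congrArg Prod.fst hc)
  · exact h t (congrArg Prod.snd hc)

lemma rowsF_monomialOf (a : NMat) (ha : a.IsComp) {ι : Fin a.rows → ℕ} {κ : Fin a.cols → ℕ}
    (hι : Function.Injective ι) (hκ : Function.Injective κ) :
    rowsF (monomialOf a ι κ) = Finset.image ι Finset.univ := by
  ext r
  simp only [rowsF, Finset.mem_image, Finsupp.mem_support_iff, Finset.mem_univ, true_and]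
  constructor
  · rintro ⟨⟨r', c'⟩, hz, rfl⟩
    by_contra hc
    push_neg at hc
    exact hz (monomialOf_apply_notin a ι κ r' c' (Or.inl fun s h => hc s h))
  · rintro ⟨s, rfl⟩
    obtain ⟨j, hj, hne⟩ := ha.1 s s.isLt
    exact ⟨(ι s, κ ⟨j, hj⟩), by rw [monomialOf_apply_mem a hι hκ]; exact hne, rfl⟩

lemma colsF_monomialOf (a : NMat) (ha : a.IsComp) {ι : Fin a.rows → ℕ} {κ : Fin a.cols → ℕ}
    (hι : Function.Injective ι) (hκ : Function.Injective κ) :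
    colsF (monomialOf a ι κ) = Finset.image κ Finset.univ := by
  ext c
  simp only [colsF, Finset.mem_image, Finsupp.mem_support_iff, Finset.mem_univ, true_and]
  constructor
  · rintro ⟨⟨r', c'⟩, hz, rfl⟩
    by_contra hc
    push_neg at hc
    exact hz (monomialOf_apply_notin a ι κ r' c' (Or.inr fun t h => hc t h))
  · rintro ⟨t, rfl⟩
    obtain ⟨i, hi, hne⟩ := ha.2 t t.isLt
    exact ⟨(ι ⟨i, hi⟩, κ t), by rw [monomialOf_apply_mem a hι hκ]; exact hne, rfl⟩

end TwoParam
namespace TwoParam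
open Finset TwoParamAux

lemma pack_isComp (m : Mon) : (pack m).IsComp := by
  constructor
  · intro i hi
    rw [pack_rows] at hi
    have hmem : nth (rowsF m) i ∈ rowsF m := nth_mem _ _ hi
    obtain ⟨⟨r, c⟩, hz, hr⟩ := Finset.mem_image.mp
      (show nth (rowsF m) i ∈ m.support.image Prod.fst from hmem)
    have hcm : c ∈ colsF m := Finset.mem_image_of_mem Prod.snd hz
    refine ⟨idx (colsF m) c, idx_lt_card _ _ hcm, ?_⟩
    rw [pack_entry m i _ hi (idx_lt_card _ _ hcm), nth_idx _ _ hcm, ← hr]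
    exact Finsupp.mem_support_iff.mp hz
  · intro j hj
    rw [pack_cols] at hj
    have hmem : nth (colsF m) j ∈ colsF m := nth_mem _ _ hj
    obtain ⟨⟨r, c⟩, hz, hc⟩ := Finset.mem_image.mp
      (show nth (colsF m) j ∈ m.support.image Prod.snd from hmem)
    have hrm : r ∈ rowsF m := Finset.mem_image_of_mem Prod.fst hz
    refine ⟨idx (rowsF m) r, idx_lt_card _ _ hrm, ?_⟩
    rw [pack_entry m _ j (idx_lt_card _ _ hrm) hj, nth_idx _ _ hrm, ← hc]
    exact Finsupp.mem_support_iff.mp hz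

lemma eq_monomialOf_pack (m : Mon) :
    m = monomialOf (pack m)
      (fun s => nth (rowsF m) s) (fun t => nth (colsF m) t) := by
  have hι : Function.Injective (fun s : Fin (pack m).rows => nth (rowsF m) (s : ℕ)) :=
    fun s t h => Fin.ext ((nth_strictMono (rowsF m)).injective h)
  have hκ : Function.Injective (fun t : Fin (pack m).cols => nth (colsF m) (t : ℕ)) :=
    fun s t h => Fin.ext ((nth_strictMono (colsF m)).injective h)
  ext ⟨r, c⟩
  by_cases hr : r ∈ rowsF m
  · by_cases hc : c ∈ colsF m
    · have h1 : r = nth (rowsF m) (idx (rowsF m) r) := (nth_idx _ _ hr).symm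
      have h2 : c = nth (colsF m) (idx (colsF m) c) := (nth_idx _ _ hc).symm
      rw [h1, h2]
      have e := monomialOf_apply_mem (pack m) hι hκ
        ⟨idx (rowsF m) r, idx_lt_card _ _ hr⟩ ⟨idx (colsF m) c, idx_lt_card _ _ hc⟩
      simp only at e
      rw [e, pack_entry m _ _ (idx_lt_card _ _ hr) (idx_lt_card _ _ hc)]
    · rw [apply_eq_zero_of_not_mem_colsF m r c hc]
      rw [monomialOf_apply_notin]
      right
      intro t hct
      exact hc (hct ▸ nth_mem (colsF m) t (by rw [← pack_cols]; exact t.isLt))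
  · rw [apply_eq_zero_of_not_mem_rowsF m r c hr]
    rw [monomialOf_apply_notin]
    left
    intro s hrs
    exact hr (hrs ▸ nth_mem (rowsF m) s (by rw [← pack_rows]; exact s.isLt))

/-- Determination of `pack` by a grid description. -/
lemma pack_eq_of_grid (m : Mon) (c : NMat) (hc : c.IsComp)
    {ρ : Fin c.rows → ℕ} {σ : Fin c.cols → ℕ} (hρ : StrictMono ρ) (hσ : StrictMono σ)
    (hgrid : ∀ (x : Fin c.rows) (y : Fin c.cols), m (ρ x, σ y) = c.entry x y)
    (hoff : ∀ r c', ((∀ x, ρ x ≠ r) ∨ ∀ y, σ y ≠ c') → m (r, c') = 0) :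
    pack m = c ∧ rowsF m = Finset.image ρ Finset.univ ∧
      colsF m = Finset.image σ Finset.univ := by
  have hrows : rowsF m = Finset.image ρ Finset.univ := by
    ext r
    simp only [rowsF, Finset.mem_image, Finsupp.mem_support_iff, Finset.mem_univ, true_and]
    constructor
    · rintro ⟨⟨r', c'⟩, hz, rfl⟩
      by_contra hcon
      push_neg at hcon
      exact hz (hoff r' c' (Or.inl hcon))
    · rintro ⟨x, rfl⟩
      obtain ⟨j, hj, hne⟩ := hc.1 x x.isLt
      exact ⟨(ρ x, σ ⟨j, hj⟩), by rw [hgrid]; exact hne, rfl⟩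
  have hcols : colsF m = Finset.image σ Finset.univ := by
    ext c'
    simp only [colsF, Finset.mem_image, Finsupp.mem_support_iff, Finset.mem_univ, true_and]
    constructor
    · rintro ⟨⟨r', c''⟩, hz, rfl⟩
      by_contra hcon
      push_neg at hcon
      exact hz (hoff r' c'' (Or.inr hcon))
    · rintro ⟨y, rfl⟩
      obtain ⟨i, hi, hne⟩ := hc.2 y y.isLt
      exact ⟨(ρ ⟨i, hi⟩, σ y), by rw [hgrid]; exact hne, rfl⟩
  have hcard : (rowsF m).card = c.rows := by rw [hrows, card_image_strictMono hρ]
  have hcard2 : (colsF m).card = c.cols := by rw [hcols, card_image_strictMono hσ]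
  refine ⟨NMat.ext' hcard hcard2 ?_, hrows, hcols⟩
  intro i j
  by_cases hij : i < (rowsF m).card ∧ j < (colsF m).card
  · rw [pack_entry m i j hij.1 hij.2]
    have hi' : i < c.rows := by omega
    have hj' : j < c.cols := by omega
    have e1 : nth (rowsF m) i = ρ ⟨i, hi'⟩ := by
      rw [hrows]; exact nth_image_strictMono hρ i hi'
    have e2 : nth (colsF m) j = σ ⟨j, hj'⟩ := by
      rw [hcols]; exact nth_image_strictMono hσ j hj'
    rw [e1, e2, hgrid]
  · rw [(pack m).entry_eq_zero i j (by rw [pack_rows, pack_cols]; omega),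
      c.entry_eq_zero i j (by omega)]

/-- Uniqueness: a monomial determines its composition. -/
lemma pack_monomialOf (a : NMat) (ha : a.IsComp) {ι : Fin a.rows → ℕ} {κ : Fin a.cols → ℕ}
    (hι : StrictMono ι) (hκ : StrictMono κ) :
    pack (monomialOf a ι κ) = a :=
  (pack_eq_of_grid (monomialOf a ι κ) a ha hι hκ
    (fun x y => monomialOf_apply_mem a hι.injective hκ.injective x y)
    (fun r c' h => monomialOf_apply_notin a ι κ r c' h)).1

/-- Characterization of `monQ` via `pack`. -/
lemma monQ_apply {R : Type*} [CommRing R] (a : NMat) (ha : a.IsComp) (m : Mon) :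
    monQ (R := R) a m = if pack m = a then 1 else 0 := by
  rw [monQ]
  congr 1
  simp only [eq_iff_iff]
  constructor
  · rintro ⟨ι, κ, hι, hκ, rfl⟩
    exact pack_monomialOf a ha hι hκ
  · rintro rfl
    exact ⟨_, _, fun s t hst => nth_strictMono (rowsF m) hst,
      fun s t hst => nth_strictMono (colsF m) hst, eq_monomialOf_pack m⟩

end TwoParam
namespace TwoParam
open Finset TwoParamAux

lemma mem_qShSet {m s j : ℕ} (p : Fin (m + s) → Fin j) :
    p ∈ qShSet m s j ↔
      Function.Surjective p ∧
      (∀ u v : Fin (m + s), u < v → (v : ℕ) < m → p u < p v) ∧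
      (∀ u v : Fin (m + s), u < v → m ≤ (u : ℕ) → p u < p v) := by
  simp [qShSet]

lemma diag_entry (a b : NMat) (u v : ℕ) :
    (a.diag b).entry u v =
      (if u < a.rows ∧ v < a.cols then a.entry u v else 0) +
      (if a.rows ≤ u ∧ a.cols ≤ v then b.entry (u - a.rows) (v - a.cols) else 0) := by
  show (if u < a.rows ∧ v < a.cols then a.entry u v
    else if a.rows ≤ u ∧ a.cols ≤ v then b.entry (u - a.rows) (v - a.cols) else 0) = _
  by_cases h1 : u < a.rows ∧ v < a.cols
  · simp only [if_pos h1, if_neg (show ¬(a.rows ≤ u ∧ a.cols ≤ v) by omega), add_zero]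
  · by_cases h2 : a.rows ≤ u ∧ a.cols ≤ v
    · simp only [if_neg h1, if_pos h2, zero_add]
    · simp only [if_neg h1, if_neg h2, add_zero]

lemma nQshMat_entry (a b : NMat) {j k : ℕ}
    (p : Fin (a.rows + b.rows) → Fin j) (q : Fin (a.cols + b.cols) → Fin k)
    (x : Fin j) (y : Fin k) :
    (nQshMat a b p q).entry x y =
      ∑ u ∈ Finset.univ.filter (fun u => p u = x),
        ∑ v ∈ Finset.univ.filter (fun v => q v = y),
          (a.diag b).entry u v := by
  show dite _ _ _ = _
  rw [dif_pos x.isLt, dif_pos y.isLt]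

lemma nQshMat_isComp (a b : NMat) (ha : a.IsComp) (hb : b.IsComp) {j k : ℕ}
    {p : Fin (a.rows + b.rows) → Fin j} {q : Fin (a.cols + b.cols) → Fin k}
    (hp : p ∈ qShSet a.rows b.rows j) (hq : q ∈ qShSet a.cols b.cols k) :
    (nQshMat a b p q).IsComp := by
  rw [mem_qShSet] at hp hq
  have hdiag : ∀ u : Fin (a.rows + b.rows), ∃ v : Fin (a.cols + b.cols),
      (a.diag b).entry u v ≠ 0 := by
    intro u
    by_cases hu : (u : ℕ) < a.rows
    · obtain ⟨v0, hv0, hne⟩ := ha.1 u hu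
      refine ⟨⟨v0, by omega⟩, ?_⟩
      show (a.diag b).entry ↑u v0 ≠ 0
      rw [diag_entry, if_pos ⟨hu, hv0⟩, if_neg (by omega)]
      simpa using hne
    · obtain ⟨v0, hv0, hne⟩ := hb.1 ((u : ℕ) - a.rows) (by omega)
      refine ⟨⟨a.cols + v0, by omega⟩, ?_⟩
      show (a.diag b).entry ↑u (a.cols + v0) ≠ 0
      rw [diag_entry, if_neg (by omega), if_pos (by omega)]
      simpa using hne
  have hdiag' : ∀ v : Fin (a.cols + b.cols), ∃ u : Fin (a.rows + b.rows),
      (a.diag b).entry u v ≠ 0 := by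
    intro v
    by_cases hv : (v : ℕ) < a.cols
    · obtain ⟨u0, hu0, hne⟩ := ha.2 v hv
      refine ⟨⟨u0, by omega⟩, ?_⟩
      show (a.diag b).entry u0 ↑v ≠ 0
      rw [diag_entry, if_pos ⟨hu0, hv⟩, if_neg (by omega)]
      simpa using hne
    · obtain ⟨u0, hu0, hne⟩ := hb.2 ((v : ℕ) - a.cols) (by omega)
      refine ⟨⟨a.rows + u0, by omega⟩, ?_⟩
      show (a.diag b).entry (a.rows + u0) ↑v ≠ 0
      rw [diag_entry, if_neg (by omega), if_pos (by omega)]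
      simpa using hne
  constructor
  · intro x hx
    obtain ⟨u, hu⟩ := hp.1 ⟨x, hx⟩
    obtain ⟨v, hv⟩ := hdiag u
    refine ⟨q v, (q v).isLt, ?_⟩
    have e := nQshMat_entry a b p q ⟨x, hx⟩ (q v)
    rw [e]
    intro h0
    have := (Finset.sum_eq_zero_iff.mp h0) u (by simp [hu])
    have := (Finset.sum_eq_zero_iff.mp this) v (by simp)
    exact hv this
  · intro y hy
    obtain ⟨v, hv⟩ := hq.1 ⟨y, hy⟩
    obtain ⟨u, hu⟩ := hdiag' v
    refine ⟨p u, (p u).isLt, ?_⟩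
    have e := nQshMat_entry a b p q (p u) ⟨y, hy⟩
    rw [e]
    intro h0
    have := (Finset.sum_eq_zero_iff.mp h0) u (by simp)
    have := (Finset.sum_eq_zero_iff.mp this) v (by simp [hv])
    exact hu this

end TwoParam
namespace TwoParam
open Finset TwoParamAux

lemma sum_univ_left {M : Type*} [AddCommMonoid M] {n₁ n₂ : ℕ} (f : Fin (n₁ + n₂) → M)
    (h : ∀ u : Fin n₂, f (Fin.natAdd n₁ u) = 0) :
    ∑ u : Fin (n₁ + n₂), f u = ∑ u : Fin n₁, f (Fin.castAdd n₂ u) := by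
  rw [Fin.sum_univ_add]
  simp [h]

lemma sum_univ_right {M : Type*} [AddCommMonoid M] {n₁ n₂ : ℕ} (f : Fin (n₁ + n₂) → M)
    (h : ∀ u : Fin n₁, f (Fin.castAdd n₂ u) = 0) :
    ∑ u : Fin (n₁ + n₂), f u = ∑ u : Fin n₂, f (Fin.natAdd n₁ u) := by
  rw [Fin.sum_univ_add]
  simp [h]

lemma CL_entry (a b : NMat) {j k : ℕ}
    (p : Fin (a.rows + b.rows) → Fin j) (q : Fin (a.cols + b.cols) → Fin k)
    {ρ : Fin j → ℕ} {σ : Fin k → ℕ} (hρ : Function.Injective ρ) (hσ : Function.Injective σ)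
    (x : Fin j) (y : Fin k) :
    (monomialOf a (fun u => ρ (p (Fin.castAdd b.rows u))) (fun v => σ (q (Fin.castAdd b.cols v)))
      + monomialOf b (fun u => ρ (p (Fin.natAdd a.rows u))) (fun v => σ (q (Fin.natAdd a.cols v))))
      (ρ x, σ y) = (nQshMat a b p q).entry x y := by
  rw [Finsupp.add_apply, nQshMat_entry, monomialOf_apply, monomialOf_apply]
  have hR : (∑ u ∈ Finset.univ.filter (fun u => p u = x),
        ∑ v ∈ Finset.univ.filter (fun v => q v = y), (a.diag b).entry u v)
      = (∑ u : Fin (a.rows + b.rows), ∑ v : Fin (a.cols + b.cols),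
          ((if p u = x ∧ q v = y ∧ (u : ℕ) < a.rows ∧ (v : ℕ) < a.cols
              then a.entry u v else 0)
          + (if p u = x ∧ q v = y ∧ a.rows ≤ (u : ℕ) ∧ a.cols ≤ (v : ℕ)
              then b.entry ((u : ℕ) - a.rows) ((v : ℕ) - a.cols) else 0))) := by
    rw [Finset.sum_filter]
    refine Finset.sum_congr rfl fun u _ => ?_
    by_cases hpu : p u = x
    · rw [if_pos hpu, Finset.sum_filter]
      refine Finset.sum_congr rfl fun v _ => ?_
      by_cases hqv : q v = y
      · rw [if_pos hqv, diag_entry]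
        simp [hpu, hqv]
      · rw [if_neg hqv]
        simp [hqv]
    · simp [hpu]
  rw [hR]
  simp only [Finset.sum_add_distrib]
  congr 1
  · -- a-block
    rw [sum_univ_left (n₁ := a.rows) (n₂ := b.rows) _ (fun u => Finset.sum_eq_zero fun v _ => by
      apply if_neg
      rintro ⟨-, -, h3, -⟩
      rw [Fin.coe_natAdd] at h3
      omega)]
    refine Finset.sum_congr rfl fun u _ => ?_
    rw [sum_univ_left (n₁ := a.cols) (n₂ := b.cols) _ (fun v => by
      apply if_neg
      rintro ⟨-, -, -, h4⟩
      rw [Fin.coe_natAdd] at h4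
      omega)]
    refine Finset.sum_congr rfl fun v _ => ?_
    by_cases hc : p (Fin.castAdd b.rows u) = x ∧ q (Fin.castAdd b.cols v) = y
    · rw [if_pos (by simp [Prod.ext_iff, hρ.eq_iff, hσ.eq_iff, hc.1, hc.2]),
        if_pos ⟨hc.1, hc.2, by simp [Fin.coe_castAdd, u.isLt], by simp [Fin.coe_castAdd, v.isLt]⟩]
      rfl
    · rw [if_neg (by simp only [Prod.ext_iff, hρ.eq_iff, hσ.eq_iff]; exact fun h => hc ⟨h.1, h.2⟩),
        if_neg (fun h => hc ⟨h.1, h.2.1⟩)]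
  · -- b-block
    rw [sum_univ_right (n₁ := a.rows) (n₂ := b.rows) _ (fun u => Finset.sum_eq_zero fun v _ => by
      apply if_neg
      rintro ⟨-, -, h3, -⟩
      rw [Fin.coe_castAdd] at h3
      omega)]
    refine Finset.sum_congr rfl fun u _ => ?_
    rw [sum_univ_right (n₁ := a.cols) (n₂ := b.cols) _ (fun v => by
      apply if_neg
      rintro ⟨-, -, -, h4⟩
      rw [Fin.coe_castAdd] at h4
      omega)]
    refine Finset.sum_congr rfl fun v _ => ?_
    by_cases hc : p (Fin.natAdd a.rows u) = x ∧ q (Fin.natAdd a.cols v) = y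
    · rw [if_pos (by simp [Prod.ext_iff, hρ.eq_iff, hσ.eq_iff, hc.1, hc.2]),
        if_pos ⟨hc.1, hc.2, by simp [Fin.coe_natAdd], by simp [Fin.coe_natAdd]⟩]
      congr 1 <;> rw [Fin.coe_natAdd] <;> omega
    · rw [if_neg (by simp only [Prod.ext_iff, hρ.eq_iff, hσ.eq_iff]; exact fun h => hc ⟨h.1, h.2⟩),
        if_neg (fun h => hc ⟨h.1, h.2.1⟩)]

lemma CL_offgrid (a b : NMat) {j k : ℕ}
    (p : Fin (a.rows + b.rows) → Fin j) (q : Fin (a.cols + b.cols) → Fin k)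
    (ρ : Fin j → ℕ) (σ : Fin k → ℕ) (r c : ℕ)
    (h : (∀ x, ρ x ≠ r) ∨ ∀ y, σ y ≠ c) :
    (monomialOf a (fun u => ρ (p (Fin.castAdd b.rows u))) (fun v => σ (q (Fin.castAdd b.cols v)))
      + monomialOf b (fun u => ρ (p (Fin.natAdd a.rows u))) (fun v => σ (q (Fin.natAdd a.cols v))))
      (r, c) = 0 := by
  rw [Finsupp.add_apply, monomialOf_apply_notin, monomialOf_apply_notin, add_zero]
  · rcases h with h | h
    · exact Or.inl fun s => h _
    · exact Or.inr fun t => h _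
  · rcases h with h | h
    · exact Or.inl fun s => h _
    · exact Or.inr fun t => h _

end TwoParam
namespace TwoParam
open Finset TwoParamAux

lemma rowsF_eq_empty_iff (m : Mon) : rowsF m = ∅ ↔ m = 0 := by
  simp [rowsF, Finset.image_eq_empty, Finsupp.support_eq_empty]

lemma colsF_eq_empty_iff (m : Mon) : colsF m = ∅ ↔ m = 0 := by
  simp [colsF, Finset.image_eq_empty, Finsupp.support_eq_empty]

/-- The forward map on one axis. -/
noncomputable def fwdP (n1 n2 : ℕ) (s1 s2 S : Finset ℕ) : Σ j : ℕ, Fin (n1 + n2) → Fin j :=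
  if h : 0 < S.card then
    ⟨S.card, fun u => ⟨idx S (if (u : ℕ) < n1 then nth s1 (u : ℕ) else nth s2 ((u : ℕ) - n1)),
      idx_lt S h _⟩⟩
  else ⟨n1 + n2, fun u => u⟩

lemma fwdP_pos {n1 n2 : ℕ} {s1 s2 S : Finset ℕ} (h : 0 < S.card) :
    fwdP n1 n2 s1 s2 S = ⟨S.card, fun u =>
      ⟨idx S (if (u : ℕ) < n1 then nth s1 (u : ℕ) else nth s2 ((u : ℕ) - n1)),
        idx_lt S h _⟩⟩ := dif_pos h

lemma fwdP_neg {n1 n2 : ℕ} {s1 s2 S : Finset ℕ} (h : ¬ 0 < S.card) :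
    fwdP n1 n2 s1 s2 S = ⟨n1 + n2, fun u => u⟩ := dif_neg h

lemma sigma_eq_of_zero {n A B : ℕ} (hn : n = 0) (hAB : A = B)
    (f : Fin n → Fin A) (g : Fin n → Fin B) :
    (⟨A, f⟩ : Σ j : ℕ, Fin n → Fin j) = ⟨B, g⟩ := by
  subst hAB
  exact congrArg (Sigma.mk A) (funext fun u => absurd u.isLt (by omega))

lemma fwdP_fst_mem_range {n1 n2 : ℕ} {s1 s2 S : Finset ℕ}
    (hS : S = s1 ∪ s2) (h1 : s1.card = n1) (h2 : s2.card = n2) :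
    (fwdP n1 n2 s1 s2 S).1 ∈ Finset.range (n1 + n2 + 1) := by
  by_cases h : 0 < S.card
  · rw [fwdP_pos h]
    have := Finset.card_union_le s1 s2
    rw [← hS, h1, h2] at this
    simp only [Finset.mem_range]
    omega
  · rw [fwdP_neg h]
    simp only [Finset.mem_range]
    omega

lemma fwdP_snd_mem {n1 n2 : ℕ} {s1 s2 S : Finset ℕ}
    (hS : S = s1 ∪ s2) (h1 : s1.card = n1) (h2 : s2.card = n2) :
    (fwdP n1 n2 s1 s2 S).2 ∈ qShSet n1 n2 (fwdP n1 n2 s1 s2 S).1 := by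
  by_cases h : 0 < S.card
  · rw [fwdP_pos h, mem_qShSet]
    refine ⟨?_, ?_, ?_⟩
    · -- surjective
      intro x
      have hx : nth S (x : ℕ) ∈ S := nth_mem S _ x.isLt
      have hx2 : nth S (x : ℕ) ∈ s1 ∪ s2 := hS ▸ hx
      rcases Finset.mem_union.mp hx2 with hx1 | hx1
      · refine ⟨⟨idx s1 (nth S (x : ℕ)), by have := idx_lt_card s1 _ hx1; omega⟩, ?_⟩
        apply Fin.ext
        show idx S (if _ < n1 then _ else _) = (x : ℕ)
        rw [if_pos (by have := idx_lt_card s1 _ hx1; omega : idx s1 (nth S (x : ℕ)) < n1)]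
        rw [nth_idx s1 _ hx1, idx_nth S _ x.isLt]
      · refine ⟨⟨n1 + idx s2 (nth S (x : ℕ)), by have := idx_lt_card s2 _ hx1; omega⟩, ?_⟩
        apply Fin.ext
        show idx S (if _ < n1 then _ else _) = (x : ℕ)
        simp only [Fin.val_mk]
        rw [if_neg (by omega)]
        have e : n1 + idx s2 (nth S (x : ℕ)) - n1 = idx s2 (nth S (x : ℕ)) := by omega
        rw [e, nth_idx s2 _ hx1, idx_nth S _ x.isLt]
    · -- strictly increasing on first block
      intro u v huv hv
      have hu : (u : ℕ) < n1 := lt_trans huv hv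
      show (⟨idx S _, _⟩ : Fin S.card) < ⟨idx S _, _⟩
      rw [Fin.mk_lt_mk, if_pos hu, if_pos hv]
      have hmu : nth s1 (u : ℕ) ∈ S := by
        rw [hS]; exact Finset.mem_union_left _ (nth_mem s1 _ (by omega))
      have hmv : nth s1 (v : ℕ) ∈ S := by
        rw [hS]; exact Finset.mem_union_left _ (nth_mem s1 _ (by omega))
      exact idx_lt_idx S hmu hmv (nth_strictMono s1 huv)
    · -- strictly increasing on second block
      intro u v huv hu
      show (⟨idx S _, _⟩ : Fin S.card) < ⟨idx S _, _⟩
      rw [Fin.mk_lt_mk, if_neg (by omega), if_neg (by omega : ¬ (v : ℕ) < n1)]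
      have hu2 : (u : ℕ) - n1 < n2 := by have := u.isLt; omega
      have hv2 : (v : ℕ) - n1 < n2 := by have := v.isLt; omega
      have hmu : nth s2 ((u : ℕ) - n1) ∈ S := by
        rw [hS]; exact Finset.mem_union_right _ (nth_mem s2 _ (by omega))
      have hmv : nth s2 ((v : ℕ) - n1) ∈ S := by
        rw [hS]; exact Finset.mem_union_right _ (nth_mem s2 _ (by omega))
      exact idx_lt_idx S hmu hmv (nth_strictMono s2 (by omega))
  · rw [fwdP_neg h, mem_qShSet]
    exact ⟨Function.surjective_id, fun _ _ h _ => h, fun _ _ h _ => h⟩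

lemma fwd_fun_eq1 {n1 n2 : ℕ} {s1 s2 S : Finset ℕ}
    (hS : S = s1 ∪ s2) (h1 : s1.card = n1) (hpos : 0 < S.card) (u : Fin n1) :
    nth S (((fwdP n1 n2 s1 s2 S).2 (Fin.castAdd n2 u) : ℕ)) = nth s1 (u : ℕ) := by
  rw [fwdP_pos hpos]
  show nth S (idx S (if ((Fin.castAdd n2 u : ℕ)) < n1 then _ else _)) = _
  rw [if_pos (by rw [Fin.coe_castAdd]; exact u.isLt)]
  have hmem : nth s1 ((Fin.castAdd n2 u : ℕ)) ∈ S := by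
    rw [hS]
    exact Finset.mem_union_left _ (nth_mem s1 _ (by rw [Fin.coe_castAdd, h1]; exact u.isLt))
  rw [nth_idx S _ hmem, Fin.coe_castAdd]

lemma fwd_fun_eq2 {n1 n2 : ℕ} {s1 s2 S : Finset ℕ}
    (hS : S = s1 ∪ s2) (h2 : s2.card = n2) (hpos : 0 < S.card) (u : Fin n2) :
    nth S (((fwdP n1 n2 s1 s2 S).2 (Fin.natAdd n1 u) : ℕ)) = nth s2 (u : ℕ) := by
  rw [fwdP_pos hpos]
  show nth S (idx S (if ((Fin.natAdd n1 u : ℕ)) < n1 then _ else _)) = _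
  rw [if_neg (by rw [Fin.coe_natAdd]; omega)]
  have e : ((Fin.natAdd n1 u : ℕ)) - n1 = (u : ℕ) := by rw [Fin.coe_natAdd]; omega
  rw [e]
  have hmem : nth s2 ((u : ℕ)) ∈ S := by
    rw [hS]
    exact Finset.mem_union_right _ (nth_mem s2 _ (by rw [h2]; exact u.isLt))
  rw [nth_idx S _ hmem]

end TwoParam
namespace TwoParam
open Finset TwoParamAux

lemma nthFin_injective (S : Finset ℕ) {n : ℕ} :
    Function.Injective (fun x : Fin n => nth S (x : ℕ)) := by
  intro x y h
  exact Fin.ext ((nth_strictMono S).injective h)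

lemma nthFin_strictMono (S : Finset ℕ) {n : ℕ} :
    StrictMono (fun x : Fin n => nth S (x : ℕ)) := by
  intro x y h
  exact nth_strictMono S h

lemma fwd_pack (a b : NMat) (ha : a.IsComp) (hb : b.IsComp) (m1 m2 : Mon)
    (hp1 : pack m1 = a) (hp2 : pack m2 = b) :
    pack (m1 + m2) =
      nQshMat a b (fwdP a.rows b.rows (rowsF m1) (rowsF m2) (rowsF (m1 + m2))).2
        (fwdP a.cols b.cols (colsF m1) (colsF m2) (colsF (m1 + m2))).2 := by
  have hca : (rowsF m1).card = a.rows := congrArg NMat.rows hp1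
  have hcb : (rowsF m2).card = b.rows := congrArg NMat.rows hp2
  have hcac : (colsF m1).card = a.cols := congrArg NMat.cols hp1
  have hcbc : (colsF m2).card = b.cols := congrArg NMat.cols hp2
  have hSr : rowsF (m1 + m2) = rowsF m1 ∪ rowsF m2 := rowsF_add _ _
  have hSc : colsF (m1 + m2) = colsF m1 ∪ colsF m2 := colsF_add _ _
  by_cases hm0 : m1 + m2 = 0
  · -- degenerate case
    have hr0 : rowsF (m1 + m2) = ∅ := (rowsF_eq_empty_iff _).mpr hm0
    have hc0 : colsF (m1 + m2) = ∅ := (colsF_eq_empty_iff _).mpr hm0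
    have h10 : m1 = 0 := by
      ext z
      have := DFunLike.congr_fun hm0 z
      rw [Finsupp.add_apply] at this
      simp only [Finsupp.coe_zero, Pi.zero_apply] at this ⊢
      omega
    have h20 : m2 = 0 := by
      ext z
      have := DFunLike.congr_fun hm0 z
      rw [Finsupp.add_apply] at this
      simp only [Finsupp.coe_zero, Pi.zero_apply] at this ⊢
      omega
    have hr1 : rowsF m1 = ∅ := (rowsF_eq_empty_iff _).mpr h10
    have hr2 : rowsF m2 = ∅ := (rowsF_eq_empty_iff _).mpr h20
    have hc1 : colsF m1 = ∅ := (colsF_eq_empty_iff _).mpr h10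
    have hc2 : colsF m2 = ∅ := (colsF_eq_empty_iff _).mpr h20
    have har : a.rows = 0 := by rw [← hca, hr1, Finset.card_empty]
    have hbr : b.rows = 0 := by rw [← hcb, hr2, Finset.card_empty]
    have hac : a.cols = 0 := by rw [← hcac, hc1, Finset.card_empty]
    have hbc : b.cols = 0 := by rw [← hcbc, hc2, Finset.card_empty]
    rw [fwdP_neg (by rw [hr0]; simp), fwdP_neg (by rw [hc0]; simp)]
    have hpr : (pack (m1 + m2)).rows = 0 := by rw [pack_rows, hr0, Finset.card_empty]
    have hpc : (pack (m1 + m2)).cols = 0 := by rw [pack_cols, hc0, Finset.card_empty]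
    refine NMat.ext' ?_ ?_ ?_
    · rw [hpr]; show (0 : ℕ) = a.rows + b.rows; omega
    · rw [hpc]; show (0 : ℕ) = a.cols + b.cols; omega
    · intro i j
      rw [(pack (m1 + m2)).entry_eq_zero i j (Or.inl (by omega)),
        (nQshMat a b _ _).entry_eq_zero i j (Or.inl (show (a.rows + b.rows : ℕ) ≤ i by omega))]
  · -- main case
    have hpos : 0 < (rowsF (m1 + m2)).card := by
      rw [Finset.card_pos, Finset.nonempty_iff_ne_empty]
      exact fun h => hm0 ((rowsF_eq_empty_iff _).mp h)
    have hposc : 0 < (colsF (m1 + m2)).card := by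
      rw [Finset.card_pos, Finset.nonempty_iff_ne_empty]
      exact fun h => hm0 ((colsF_eq_empty_iff _).mp h)
    have em1 : m1 = monomialOf a (fun s => nth (rowsF m1) (s : ℕ))
        (fun t => nth (colsF m1) (t : ℕ)) := by
      have := eq_monomialOf_pack m1
      rw [hp1] at this
      exact this
    have em2 : m2 = monomialOf b (fun s => nth (rowsF m2) (s : ℕ))
        (fun t => nth (colsF m2) (t : ℕ)) := by
      have := eq_monomialOf_pack m2
      rw [hp2] at this
      exact this
    have hf1 : (fun u : Fin a.rows => nth (rowsF (m1 + m2))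
          (((fwdP a.rows b.rows (rowsF m1) (rowsF m2) (rowsF (m1 + m2))).2
            (Fin.castAdd b.rows u) : ℕ)))
        = fun u : Fin a.rows => nth (rowsF m1) (u : ℕ) :=
      funext fun u => fwd_fun_eq1 hSr hca hpos u
    have hf2 : (fun u : Fin b.rows => nth (rowsF (m1 + m2))
          (((fwdP a.rows b.rows (rowsF m1) (rowsF m2) (rowsF (m1 + m2))).2
            (Fin.natAdd a.rows u) : ℕ)))
        = fun u : Fin b.rows => nth (rowsF m2) (u : ℕ) :=
      funext fun u => fwd_fun_eq2 hSr hcb hpos u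
    have hg1 : (fun v : Fin a.cols => nth (colsF (m1 + m2))
          (((fwdP a.cols b.cols (colsF m1) (colsF m2) (colsF (m1 + m2))).2
            (Fin.castAdd b.cols v) : ℕ)))
        = fun v : Fin a.cols => nth (colsF m1) (v : ℕ) :=
      funext fun v => fwd_fun_eq1 hSc hcac hposc v
    have hg2 : (fun v : Fin b.cols => nth (colsF (m1 + m2))
          (((fwdP a.cols b.cols (colsF m1) (colsF m2) (colsF (m1 + m2))).2
            (Fin.natAdd a.cols v) : ℕ)))
        = fun v : Fin b.cols => nth (colsF m2) (v : ℕ) :=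
      funext fun v => fwd_fun_eq2 hSc hcbc hposc v
    refine (pack_eq_of_grid (m1 + m2) _
      (nQshMat_isComp a b ha hb (fwdP_snd_mem hSr hca hcb) (fwdP_snd_mem hSc hcac hcbc))
      (ρ := fun x => nth (rowsF (m1 + m2)) (x : ℕ))
      (σ := fun y => nth (colsF (m1 + m2)) (y : ℕ))
      (nthFin_strictMono _) (nthFin_strictMono _) ?_ ?_).1
    · intro x y
      have key := CL_entry a b
        (fwdP a.rows b.rows (rowsF m1) (rowsF m2) (rowsF (m1 + m2))).2
        (fwdP a.cols b.cols (colsF m1) (colsF m2) (colsF (m1 + m2))).2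
        (nthFin_injective (rowsF (m1 + m2))) (nthFin_injective (colsF (m1 + m2))) x y
      rw [hf1, hf2, hg1, hg2, ← em1, ← em2] at key
      exact key
    · intro r c' h
      have key := CL_offgrid a b
        (fwdP a.rows b.rows (rowsF m1) (rowsF m2) (rowsF (m1 + m2))).2
        (fwdP a.cols b.cols (colsF m1) (colsF m2) (colsF (m1 + m2))).2
        (fun x => nth (rowsF (m1 + m2)) (x : ℕ))
        (fun y => nth (colsF (m1 + m2)) (y : ℕ)) r c' h
      rw [hf1, hf2, hg1, hg2, ← em1, ← em2] at key
      exact key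

end TwoParam
namespace TwoParam
open Finset TwoParamAux

noncomputable def bwd1 (a b : NMat) (m : Mon) {j k : ℕ}
    (p : Fin (a.rows + b.rows) → Fin j) (q : Fin (a.cols + b.cols) → Fin k) : Mon :=
  monomialOf a (fun u => nth (rowsF m) ((p (Fin.castAdd b.rows u) : ℕ)))
    (fun v => nth (colsF m) ((q (Fin.castAdd b.cols v) : ℕ)))

noncomputable def bwd2 (a b : NMat) (m : Mon) {j k : ℕ}
    (p : Fin (a.rows + b.rows) → Fin j) (q : Fin (a.cols + b.cols) → Fin k) : Mon :=
  monomialOf b (fun u => nth (rowsF m) ((p (Fin.natAdd a.rows u) : ℕ)))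
    (fun v => nth (colsF m) ((q (Fin.natAdd a.cols v) : ℕ)))

lemma block1_strictMono {n1 n2 jj : ℕ} {p : Fin (n1 + n2) → Fin jj}
    (hp : p ∈ qShSet n1 n2 jj) (S : Finset ℕ) :
    StrictMono (fun u : Fin n1 => nth S ((p (Fin.castAdd n2 u) : ℕ))) := by
  intro u v huv
  have h := ((mem_qShSet p).mp hp).2.1 (Fin.castAdd n2 u) (Fin.castAdd n2 v)
    (by rw [Fin.lt_def, Fin.coe_castAdd, Fin.coe_castAdd]; exact huv)
    (by rw [Fin.coe_castAdd]; exact v.isLt)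
  exact nth_strictMono S (Fin.lt_def.mp h)

lemma block2_strictMono {n1 n2 jj : ℕ} {p : Fin (n1 + n2) → Fin jj}
    (hp : p ∈ qShSet n1 n2 jj) (S : Finset ℕ) :
    StrictMono (fun u : Fin n2 => nth S ((p (Fin.natAdd n1 u) : ℕ))) := by
  intro u v huv
  have h := ((mem_qShSet p).mp hp).2.2 (Fin.natAdd n1 u) (Fin.natAdd n1 v)
    (by rw [Fin.lt_def, Fin.coe_natAdd, Fin.coe_natAdd]; omega)
    (by rw [Fin.coe_natAdd]; omega)
  exact nth_strictMono S (Fin.lt_def.mp h)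

lemma bwd1_pack (a b : NMat) (ha : a.IsComp) (m : Mon) {j k : ℕ}
    {p : Fin (a.rows + b.rows) → Fin j} {q : Fin (a.cols + b.cols) → Fin k}
    (hp : p ∈ qShSet a.rows b.rows j) (hq : q ∈ qShSet a.cols b.cols k) :
    pack (bwd1 a b m p q) = a :=
  pack_monomialOf a ha (block1_strictMono hp (rowsF m)) (block1_strictMono hq (colsF m))

lemma bwd2_pack (a b : NMat) (hb : b.IsComp) (m : Mon) {j k : ℕ}
    {p : Fin (a.rows + b.rows) → Fin j} {q : Fin (a.cols + b.cols) → Fin k}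
    (hp : p ∈ qShSet a.rows b.rows j) (hq : q ∈ qShSet a.cols b.cols k) :
    pack (bwd2 a b m p q) = b :=
  pack_monomialOf b hb (block2_strictMono hp (rowsF m)) (block2_strictMono hq (colsF m))

lemma bwd_add (a b : NMat) (m : Mon) {j k : ℕ}
    {p : Fin (a.rows + b.rows) → Fin j} {q : Fin (a.cols + b.cols) → Fin k}
    (hpk : pack m = nQshMat a b p q) :
    bwd1 a b m p q + bwd2 a b m p q = m := by
  have hjr : (rowsF m).card = j := congrArg NMat.rows hpk
  have hkc : (colsF m).card = k := congrArg NMat.cols hpk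
  ext z
  obtain ⟨r, c⟩ := z
  unfold bwd1 bwd2
  by_cases hr : r ∈ rowsF m
  · by_cases hc : c ∈ colsF m
    · have hx : idx (rowsF m) r < j := by rw [← hjr]; exact idx_lt_card _ _ hr
      have hy : idx (colsF m) c < k := by rw [← hkc]; exact idx_lt_card _ _ hc
      have key := CL_entry a b p q
        (nthFin_injective (rowsF m) (n := j)) (nthFin_injective (colsF m) (n := k))
        ⟨idx (rowsF m) r, hx⟩ ⟨idx (colsF m) c, hy⟩
      have hrr : nth (rowsF m) ((⟨idx (rowsF m) r, hx⟩ : Fin j) : ℕ) = r := nth_idx _ _ hr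
      have hcc : nth (colsF m) ((⟨idx (colsF m) c, hy⟩ : Fin k) : ℕ) = c := nth_idx _ _ hc
      rw [hrr, hcc] at key
      rw [key, ← hpk, pack_entry m _ _ (by rw [hjr]; exact hx) (by rw [hkc]; exact hy)]
      show m (nth (rowsF m) (idx (rowsF m) r), nth (colsF m) (idx (colsF m) c)) = m (r, c)
      rw [nth_idx _ _ hr, nth_idx _ _ hc]
    · have key := CL_offgrid a b p q
        (fun x : Fin j => nth (rowsF m) (x : ℕ)) (fun y : Fin k => nth (colsF m) (y : ℕ))
        r c (Or.inr fun y hEq => hc (hEq ▸ nth_mem (colsF m) _ (by rw [hkc]; exact y.isLt)))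
      rw [key, apply_eq_zero_of_not_mem_colsF m r c hc]
  · have key := CL_offgrid a b p q
      (fun x : Fin j => nth (rowsF m) (x : ℕ)) (fun y : Fin k => nth (colsF m) (y : ℕ))
      r c (Or.inl fun x hEq => hr (hEq ▸ nth_mem (rowsF m) _ (by rw [hjr]; exact x.isLt)))
    rw [key, apply_eq_zero_of_not_mem_rowsF m r c hr]

end TwoParam
namespace TwoParam
open Finset TwoParamAux

lemma monomialOf_eq_zero (a : NMat) (h : a.rows = 0)
    (ι : Fin a.rows → ℕ) (κ : Fin a.cols → ℕ) : monomialOf a ι κ = 0 := by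
  rw [monomialOf]
  exact Finset.sum_eq_zero fun s _ => absurd s.isLt (by omega)

lemma add_eq_zero_left {m1 m2 : Mon} (h : m1 + m2 = 0) : m1 = 0 := by
  ext z
  have := DFunLike.congr_fun h z
  rw [Finsupp.add_apply] at this
  simp only [Finsupp.coe_zero, Pi.zero_apply] at this ⊢
  omega

lemma add_eq_zero_right {m1 m2 : Mon} (h : m1 + m2 = 0) : m2 = 0 := by
  rw [add_comm] at h
  exact add_eq_zero_left h

lemma core (a b : NMat) (ha : a.IsComp) (hb : b.IsComp) (m : Mon) :
    ((Finset.HasAntidiagonal.antidiagonal m).filter fun z => pack z.1 = a ∧ pack z.2 = b).card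
      = ((((Finset.range (a.rows + b.rows + 1)).sigma fun j => qShSet a.rows b.rows j) ×ˢ
          ((Finset.range (a.cols + b.cols + 1)).sigma fun k => qShSet a.cols b.cols k)).filter
          fun z => pack m = nQshMat a b z.1.2 z.2.2).card := by
  refine Finset.card_nbij'
    (fun z => (fwdP a.rows b.rows (rowsF z.1) (rowsF z.2) (rowsF m),
               fwdP a.cols b.cols (colsF z.1) (colsF z.2) (colsF m)))
    (fun w => (bwd1 a b m w.1.2 w.2.2, bwd2 a b m w.1.2 w.2.2)) ?_ ?_ ?_ ?_
  · -- forward lands in R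
    rintro ⟨z1, z2⟩ hz
    rw [Finset.mem_coe, Finset.mem_filter] at hz
    obtain ⟨hzm, hp1, hp2⟩ := hz
    have hm : z1 + z2 = m := Finset.HasAntidiagonal.mem_antidiagonal.mp hzm
    subst hm
    rw [Finset.mem_coe, Finset.mem_filter, Finset.mem_product]
    exact ⟨⟨Finset.mem_sigma.mpr
        ⟨fwdP_fst_mem_range (rowsF_add z1 z2) (congrArg NMat.rows hp1) (congrArg NMat.rows hp2),
         fwdP_snd_mem (rowsF_add z1 z2) (congrArg NMat.rows hp1) (congrArg NMat.rows hp2)⟩,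
      Finset.mem_sigma.mpr
        ⟨fwdP_fst_mem_range (colsF_add z1 z2) (congrArg NMat.cols hp1) (congrArg NMat.cols hp2),
         fwdP_snd_mem (colsF_add z1 z2) (congrArg NMat.cols hp1) (congrArg NMat.cols hp2)⟩⟩,
      fwd_pack a b ha hb z1 z2 hp1 hp2⟩
  · -- backward lands in L
    rintro ⟨⟨j, p⟩, ⟨k, q⟩⟩ hw
    rw [Finset.mem_coe, Finset.mem_filter, Finset.mem_product] at hw
    obtain ⟨⟨h1, h2⟩, hpk⟩ := hw
    have hp := (Finset.mem_sigma.mp h1).2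
    have hq := (Finset.mem_sigma.mp h2).2
    rw [Finset.mem_coe, Finset.mem_filter]
    exact ⟨Finset.HasAntidiagonal.mem_antidiagonal.mpr (bwd_add a b m hpk),
      bwd1_pack a b ha m hp hq, bwd2_pack a b hb m hp hq⟩
  · -- left inverse
    rintro ⟨z1, z2⟩ hz
    rw [Finset.mem_coe, Finset.mem_filter] at hz
    obtain ⟨hzm, hp1, hp2⟩ := hz
    have hm : z1 + z2 = m := Finset.HasAntidiagonal.mem_antidiagonal.mp hzm
    subst hm
    have hca : (rowsF z1).card = a.rows := congrArg NMat.rows hp1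
    have hcb : (rowsF z2).card = b.rows := congrArg NMat.rows hp2
    have hcac : (colsF z1).card = a.cols := congrArg NMat.cols hp1
    have hcbc : (colsF z2).card = b.cols := congrArg NMat.cols hp2
    have hSr : rowsF (z1 + z2) = rowsF z1 ∪ rowsF z2 := rowsF_add _ _
    have hSc : colsF (z1 + z2) = colsF z1 ∪ colsF z2 := colsF_add _ _
    by_cases hm0 : z1 + z2 = 0
    · have h10 : z1 = 0 := add_eq_zero_left hm0
      have h20 : z2 = 0 := add_eq_zero_right hm0
      have har : a.rows = 0 := by
        rw [← hca, h10, (rowsF_eq_empty_iff _).mpr rfl, Finset.card_empty]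
      have hbr : b.rows = 0 := by
        rw [← hcb, h20, (rowsF_eq_empty_iff _).mpr rfl, Finset.card_empty]
      rw [Prod.mk.injEq]
      constructor
      · rw [h10]
        exact monomialOf_eq_zero a har _ _
      · rw [h20]
        exact monomialOf_eq_zero b hbr _ _
    · have hpos : 0 < (rowsF (z1 + z2)).card := by
        rw [Finset.card_pos, Finset.nonempty_iff_ne_empty]
        exact fun h => hm0 ((rowsF_eq_empty_iff _).mp h)
      have hposc : 0 < (colsF (z1 + z2)).card := by
        rw [Finset.card_pos, Finset.nonempty_iff_ne_empty]
        exact fun h => hm0 ((colsF_eq_empty_iff _).mp h)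
      have em1 : z1 = monomialOf a (fun s => nth (rowsF z1) (s : ℕ))
          (fun t => nth (colsF z1) (t : ℕ)) := by
        have := eq_monomialOf_pack z1
        rw [hp1] at this
        exact this
      have em2 : z2 = monomialOf b (fun s => nth (rowsF z2) (s : ℕ))
          (fun t => nth (colsF z2) (t : ℕ)) := by
        have := eq_monomialOf_pack z2
        rw [hp2] at this
        exact this
      rw [Prod.mk.injEq]
      constructor
      · show bwd1 a b (z1 + z2) _ _ = z1
        unfold bwd1
        rw [show (fun u : Fin a.rows => nth (rowsF (z1 + z2))
              (((fwdP a.rows b.rows (rowsF z1) (rowsF z2) (rowsF (z1 + z2))).2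
                (Fin.castAdd b.rows u) : ℕ)))
            = fun u : Fin a.rows => nth (rowsF z1) (u : ℕ) from
          funext fun u => fwd_fun_eq1 hSr hca hpos u]
        rw [show (fun v : Fin a.cols => nth (colsF (z1 + z2))
              (((fwdP a.cols b.cols (colsF z1) (colsF z2) (colsF (z1 + z2))).2
                (Fin.castAdd b.cols v) : ℕ)))
            = fun v : Fin a.cols => nth (colsF z1) (v : ℕ) from
          funext fun v => fwd_fun_eq1 hSc hcac hposc v]
        exact em1.symm
      · show bwd2 a b (z1 + z2) _ _ = z2
        unfold bwd2
        rw [show (fun u : Fin b.rows => nth (rowsF (z1 + z2))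
              (((fwdP a.rows b.rows (rowsF z1) (rowsF z2) (rowsF (z1 + z2))).2
                (Fin.natAdd a.rows u) : ℕ)))
            = fun u : Fin b.rows => nth (rowsF z2) (u : ℕ) from
          funext fun u => fwd_fun_eq2 hSr hcb hpos u]
        rw [show (fun v : Fin b.cols => nth (colsF (z1 + z2))
              (((fwdP a.cols b.cols (colsF z1) (colsF z2) (colsF (z1 + z2))).2
                (Fin.natAdd a.cols v) : ℕ)))
            = fun v : Fin b.cols => nth (colsF z2) (v : ℕ) from
          funext fun v => fwd_fun_eq2 hSc hcbc hposc v]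
        exact em2.symm
  · -- right inverse
    rintro ⟨⟨j, p⟩, ⟨k, q⟩⟩ hw
    rw [Finset.mem_coe, Finset.mem_filter, Finset.mem_product] at hw
    obtain ⟨⟨h1, h2⟩, hpk⟩ := hw
    have hp := (Finset.mem_sigma.mp h1).2
    have hq := (Finset.mem_sigma.mp h2).2
    have hjr : (rowsF m).card = j := congrArg NMat.rows hpk
    have hkc : (colsF m).card = k := congrArg NMat.cols hpk
    have hι1 := block1_strictMono hp (rowsF m)
    have hι2 := block2_strictMono hp (rowsF m)
    have hκ1 := block1_strictMono hq (colsF m)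
    have hκ2 := block2_strictMono hq (colsF m)
    have rowsM1 : rowsF (bwd1 a b m p q) = Finset.image
        (fun u : Fin a.rows => nth (rowsF m) ((p (Fin.castAdd b.rows u) : ℕ))) Finset.univ := by
      unfold bwd1
      exact rowsF_monomialOf a ha hι1.injective hκ1.injective
    have rowsM2 : rowsF (bwd2 a b m p q) = Finset.image
        (fun u : Fin b.rows => nth (rowsF m) ((p (Fin.natAdd a.rows u) : ℕ))) Finset.univ := by
      unfold bwd2
      exact rowsF_monomialOf b hb hι2.injective hκ2.injective
    have colsM1 : colsF (bwd1 a b m p q) = Finset.image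
        (fun v : Fin a.cols => nth (colsF m) ((q (Fin.castAdd b.cols v) : ℕ))) Finset.univ := by
      unfold bwd1
      exact colsF_monomialOf a ha hι1.injective hκ1.injective
    have colsM2 : colsF (bwd2 a b m p q) = Finset.image
        (fun v : Fin b.cols => nth (colsF m) ((q (Fin.natAdd a.cols v) : ℕ))) Finset.univ := by
      unfold bwd2
      exact colsF_monomialOf b hb hι2.injective hκ2.injective
    rw [Prod.mk.injEq]
    constructor
    · -- rows component
      by_cases hpos : 0 < (rowsF m).card
      · rw [fwdP_pos hpos]
        subst hjr
        refine congrArg (Sigma.mk _) (funext fun u => Fin.ext ?_)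
        show idx (rowsF m) (if (u : ℕ) < a.rows then nth (rowsF (bwd1 a b m p q)) (u : ℕ)
            else nth (rowsF (bwd2 a b m p q)) ((u : ℕ) - a.rows)) = ((p u : ℕ))
        by_cases hu : (u : ℕ) < a.rows
        · rw [if_pos hu]
          have e : nth (rowsF (bwd1 a b m p q)) (u : ℕ) = nth (rowsF m) ((p u : ℕ)) := by
            rw [rowsM1, nth_image_strictMono hι1 (u : ℕ) hu]
            show nth (rowsF m) ((p (Fin.castAdd b.rows ⟨(u : ℕ), hu⟩) : ℕ)) = _
            have ecast : Fin.castAdd b.rows ⟨(u : ℕ), hu⟩ = u := Fin.ext rfl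
            rw [ecast]
          rw [e, idx_nth _ _ (p u).isLt]
        · rw [if_neg hu]
          have hu2 : (u : ℕ) - a.rows < b.rows := by have := u.isLt; omega
          have e : nth (rowsF (bwd2 a b m p q)) ((u : ℕ) - a.rows)
              = nth (rowsF m) ((p u : ℕ)) := by
            rw [rowsM2, nth_image_strictMono hι2 _ hu2]
            show nth (rowsF m) ((p (Fin.natAdd a.rows ⟨(u : ℕ) - a.rows, hu2⟩) : ℕ)) = _
            have ecast : Fin.natAdd a.rows ⟨(u : ℕ) - a.rows, hu2⟩ = u := by
              apply Fin.ext
              rw [Fin.coe_natAdd]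
              show a.rows + ((u : ℕ) - a.rows) = (u : ℕ)
              omega
            rw [ecast]
          rw [e, idx_nth _ _ (p u).isLt]
      · rw [fwdP_neg hpos]
        have hj0 : j = 0 := by omega
        have h0 : a.rows + b.rows = 0 := by
          by_contra h
          have := (p ⟨0, by omega⟩).isLt
          omega
        exact sigma_eq_of_zero h0 (by omega) _ _
    · -- cols component
      by_cases hpos : 0 < (colsF m).card
      · rw [fwdP_pos hpos]
        subst hkc
        refine congrArg (Sigma.mk _) (funext fun v => Fin.ext ?_)
        show idx (colsF m) (if (v : ℕ) < a.cols then nth (colsF (bwd1 a b m p q)) (v : ℕ)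
            else nth (colsF (bwd2 a b m p q)) ((v : ℕ) - a.cols)) = ((q v : ℕ))
        by_cases hv : (v : ℕ) < a.cols
        · rw [if_pos hv]
          have e : nth (colsF (bwd1 a b m p q)) (v : ℕ) = nth (colsF m) ((q v : ℕ)) := by
            rw [colsM1, nth_image_strictMono hκ1 (v : ℕ) hv]
            show nth (colsF m) ((q (Fin.castAdd b.cols ⟨(v : ℕ), hv⟩) : ℕ)) = _
            have ecast : Fin.castAdd b.cols ⟨(v : ℕ), hv⟩ = v := Fin.ext rfl
            rw [ecast]
          rw [e, idx_nth _ _ (q v).isLt]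
        · rw [if_neg hv]
          have hv2 : (v : ℕ) - a.cols < b.cols := by have := v.isLt; omega
          have e : nth (colsF (bwd2 a b m p q)) ((v : ℕ) - a.cols)
              = nth (colsF m) ((q v : ℕ)) := by
            rw [colsM2, nth_image_strictMono hκ2 _ hv2]
            show nth (colsF m) ((q (Fin.natAdd a.cols ⟨(v : ℕ) - a.cols, hv2⟩) : ℕ)) = _
            have ecast : Fin.natAdd a.cols ⟨(v : ℕ) - a.cols, hv2⟩ = v := by
              apply Fin.ext
              rw [Fin.coe_natAdd]
              show a.cols + ((v : ℕ) - a.cols) = (v : ℕ)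
              omega
            rw [ecast]
          rw [e, idx_nth _ _ (q v).isLt]
      · rw [fwdP_neg hpos]
        have hk0 : k = 0 := by omega
        have h0 : a.cols + b.cols = 0 := by
          by_contra h
          have := (q ⟨0, by omega⟩).isLt
          omega
        exact sigma_eq_of_zero h0 (by omega) _ _

end TwoParam
namespace TwoParam
open Finset TwoParamAux

lemma part1 (R : Type*) [CommRing R] (a b : NMat) (ha : a.IsComp) (hb : b.IsComp) :
    mulF (monQ (R := R) a) (monQ (R := R) b) =
      ∑ j ∈ Finset.range (a.rows + b.rows + 1),
        ∑ k ∈ Finset.range (a.cols + b.cols + 1),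
          ∑ p ∈ qShSet a.rows b.rows j,
            ∑ q ∈ qShSet a.cols b.cols k,
              monQ (R := R) (nQshMat a b p q) := by
  funext M
  have hL : mulF (monQ (R := R) a) (monQ (R := R) b) M
      = (((Finset.HasAntidiagonal.antidiagonal M).filter fun z => pack z.1 = a ∧ pack z.2 = b).card : R) := by
    show (∑ z ∈ Finset.HasAntidiagonal.antidiagonal M, monQ (R := R) a z.1 * monQ (R := R) b z.2) = _
    rw [← Finset.sum_boole]
    refine Finset.sum_congr rfl fun z _ => ?_
    rw [monQ_apply a ha, monQ_apply b hb]
    by_cases h1 : pack z.1 = a <;> by_cases h2 : pack z.2 = b <;> simp [h1, h2]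
  rw [hL, core a b ha hb M, ← Finset.sum_boole]
  rw [Finset.sum_product]
  simp only [Finset.sum_apply]
  rw [← Finset.sum_sigma' (Finset.range (a.rows + b.rows + 1))
    (fun j => qShSet a.rows b.rows j)
    (fun j p => ∑ y ∈ (Finset.range (a.cols + b.cols + 1)).sigma
        (fun k => qShSet a.cols b.cols k),
      if pack M = nQshMat a b p y.2 then (1 : R) else 0)]
  refine Finset.sum_congr rfl fun j _ => ?_
  have step : ∀ p ∈ qShSet a.rows b.rows j,
      (∑ y ∈ (Finset.range (a.cols + b.cols + 1)).sigma (fun k => qShSet a.cols b.cols k),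
        if pack M = nQshMat a b p y.2 then (1 : R) else 0)
      = ∑ k ∈ Finset.range (a.cols + b.cols + 1), ∑ q ∈ qShSet a.cols b.cols k,
          if pack M = nQshMat a b p q then (1 : R) else 0 := by
    intro p _
    rw [← Finset.sum_sigma' (Finset.range (a.cols + b.cols + 1))
      (fun k => qShSet a.cols b.cols k)
      (fun k q => if pack M = nQshMat a b p q then (1 : R) else 0)]
  rw [Finset.sum_congr rfl step, Finset.sum_comm]
  refine Finset.sum_congr rfl fun k _ => ?_
  refine Finset.sum_congr rfl fun p hp => ?_
  refine Finset.sum_congr rfl fun q hq => ?_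
  rw [monQ_apply _ (nQshMat_isComp a b ha hb hp hq)]

end TwoParam
namespace TwoParam
open Finset TwoParamAux

lemma mdeg_add (m1 m2 : Mon) : mdeg (m1 + m2) = mdeg m1 + mdeg m2 := by
  rw [mdeg, mdeg, mdeg]
  exact Finsupp.sum_add_index' (fun _ => rfl) (fun _ _ _ => rfl)

lemma qsym_canon {R : Type*} [CommRing R] {f : Mon → R} (hf : IsQSym f) (m : Mon) :
    f m = f (monomialOf (pack m) (fun s => (s : ℕ)) (fun t => (t : ℕ))) := by
  conv_lhs => rw [eq_monomialOf_pack m]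
  exact hf.2 (pack m) (pack_isComp m) _ _ (nthFin_strictMono _) (nthFin_strictMono _)

lemma part2 {R : Type*} [CommRing R] (f g : Mon → R) (hf : IsQSym f) (hg : IsQSym g) :
    IsQSym (mulF f g) := by
  obtain ⟨⟨Df, hDf⟩, hfs⟩ := hf
  obtain ⟨⟨Dg, hDg⟩, hgs⟩ := hg
  constructor
  · refine ⟨Df + Dg, fun m hm => ?_⟩
    obtain ⟨z, hz, hne⟩ := Finset.exists_ne_zero_of_sum_ne_zero (by unfold mulF at hm; exact hm)
    have h1 : f z.1 ≠ 0 := left_ne_zero_of_mul hne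
    have h2 : g z.2 ≠ 0 := right_ne_zero_of_mul hne
    have hzm : z.1 + z.2 = m := Finset.HasAntidiagonal.mem_antidiagonal.mp hz
    rw [← hzm, mdeg_add]
    exact Nat.add_le_add (hDf _ h1) (hDg _ h2)
  · intro a ha ι κ hι hκ
    have hf' : IsQSym f := ⟨⟨Df, hDf⟩, hfs⟩
    have hg' : IsQSym g := ⟨⟨Dg, hDg⟩, hgs⟩
    set M := monomialOf a ι κ with hM
    set M' := monomialOf a (fun s => (s : ℕ)) (fun t => (t : ℕ)) with hM'
    have hMa : pack M = a := pack_monomialOf a ha hι hκ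
    have hM'a : pack M' = a :=
      pack_monomialOf a ha (fun _ _ h => h) Fin.val_strictMono
    set F : Mon × Mon → NMat × NMat := fun z => (pack z.1, pack z.2) with hF
    set T := ((Finset.HasAntidiagonal.antidiagonal M).image F) ∪ ((Finset.HasAntidiagonal.antidiagonal M').image F) with hT
    have hmap : ∀ z ∈ Finset.HasAntidiagonal.antidiagonal M, F z ∈ T := fun z hz =>
      Finset.mem_union_left _ (Finset.mem_image_of_mem F hz)
    have hmap' : ∀ z ∈ Finset.HasAntidiagonal.antidiagonal M', F z ∈ T := fun z hz =>
      Finset.mem_union_right _ (Finset.mem_image_of_mem F hz)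
    have hfib : ∀ (N : Mon) (cd : NMat × NMat),
        (∑ z ∈ (Finset.HasAntidiagonal.antidiagonal N).filter fun z => F z = cd, f z.1 * g z.2)
        = ((Finset.HasAntidiagonal.antidiagonal N).filter fun z => F z = cd).card •
            (f (monomialOf cd.1 (fun s => (s : ℕ)) (fun t => (t : ℕ))) *
             g (monomialOf cd.2 (fun s => (s : ℕ)) (fun t => (t : ℕ)))) := by
      intro N cd
      rw [← Finset.sum_const]
      refine Finset.sum_congr rfl fun z hz => ?_
      have h := (Finset.mem_filter.mp hz).2
      have e1 : pack z.1 = cd.1 := congrArg Prod.fst h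
      have e2 : pack z.2 = cd.2 := congrArg Prod.snd h
      rw [qsym_canon hf' z.1, qsym_canon hg' z.2, e1, e2]
    have hfilter : ∀ (N : Mon) (cd : NMat × NMat),
        (Finset.HasAntidiagonal.antidiagonal N).filter (fun z => F z = cd)
          = (Finset.HasAntidiagonal.antidiagonal N).filter fun z => pack z.1 = cd.1 ∧ pack z.2 = cd.2 := by
      intro N cd
      refine Finset.filter_congr fun z _ => ?_
      rw [hF]
      simp [Prod.ext_iff]
    have hcard : ∀ cd : NMat × NMat,
        ((Finset.HasAntidiagonal.antidiagonal M).filter fun z => F z = cd).card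
          = ((Finset.HasAntidiagonal.antidiagonal M').filter fun z => F z = cd).card := by
      intro cd
      rw [hfilter M cd, hfilter M' cd]
      by_cases hc1 : cd.1.IsComp
      · by_cases hc2 : cd.2.IsComp
        · have e1 := core cd.1 cd.2 hc1 hc2 M
          have e2 := core cd.1 cd.2 hc1 hc2 M'
          rw [hMa, ← hM'a] at e1
          exact e1.trans e2.symm
        · rw [Finset.filter_false_of_mem
              (fun z _ (h : pack z.1 = cd.1 ∧ pack z.2 = cd.2) => hc2 (h.2 ▸ pack_isComp z.2)),
            Finset.filter_false_of_mem
              (fun z _ (h : pack z.1 = cd.1 ∧ pack z.2 = cd.2) => hc2 (h.2 ▸ pack_isComp z.2))]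
      · rw [Finset.filter_false_of_mem
            (fun z _ (h : pack z.1 = cd.1 ∧ pack z.2 = cd.2) => hc1 (h.1 ▸ pack_isComp z.1)),
          Finset.filter_false_of_mem
            (fun z _ (h : pack z.1 = cd.1 ∧ pack z.2 = cd.2) => hc1 (h.1 ▸ pack_isComp z.1))]
    show (∑ z ∈ Finset.HasAntidiagonal.antidiagonal M, f z.1 * g z.2)
        = ∑ z ∈ Finset.HasAntidiagonal.antidiagonal M', f z.1 * g z.2
    rw [← Finset.sum_fiberwise_of_maps_to hmap (fun z => f z.1 * g z.2),
      ← Finset.sum_fiberwise_of_maps_to hmap' (fun z => f z.1 * g z.2)]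
    refine Finset.sum_congr rfl fun cd _ => ?_
    rw [hfib M cd, hfib M' cd, hcard cd]

lemma part3 {R : Type*} [CommRing R] :
    IsQSym (fun m : Mon => if m = 0 then (1 : R) else 0) := by
  constructor
  · refine ⟨0, fun m hm => ?_⟩
    by_cases h : m = 0
    · rw [h]
      simp [mdeg]
    · exact absurd (if_neg h) hm
  · intro a ha ι κ hι hκ
    have key : ∀ (ι' : Fin a.rows → ℕ) (κ' : Fin a.cols → ℕ),
        StrictMono ι' → StrictMono κ' → (monomialOf a ι' κ' = 0 ↔ a.rows = 0) := by
      intro ι' κ' hι' hκ'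
      constructor
      · intro h
        have hpk := pack_monomialOf a ha hι' hκ'
        rw [h] at hpk
        rw [← hpk, pack_rows, (rowsF_eq_empty_iff (0 : Mon)).mpr rfl, Finset.card_empty]
      · intro h
        exact monomialOf_eq_zero a h _ _
    simp only
    rw [if_congr ((key ι κ hι hκ).trans
      (key (fun s => (s : ℕ)) (fun t => (t : ℕ)) (fun _ _ h => h) Fin.val_strictMono).symm)
      rfl rfl]

end TwoParam
open TwoParam in
/-- the quasi-shuffle identity for monomial two-parameter
quasisymmetric functions; in particular `QSym` is closed under
multiplication and contains `1`. -/
theorem statement17 (R : Type*) [CommRing R] [IsDomain R] :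
    (∀ a b : NMat, a.IsComp → b.IsComp →
      mulF (monQ (R := R) a) (monQ (R := R) b) =
        ∑ j ∈ Finset.range (a.rows + b.rows + 1),
          ∑ k ∈ Finset.range (a.cols + b.cols + 1),
            ∑ p ∈ qShSet a.rows b.rows j,
              ∑ q ∈ qShSet a.cols b.cols k,
                monQ (R := R) (nQshMat a b p q)) ∧
    (∀ f g : Mon → R, IsQSym f → IsQSym g → IsQSym (mulF f g)) ∧
    IsQSym (fun m : Mon => if m = 0 then (1 : R) else 0) := by
  exact ⟨fun a b ha hb => TwoParam.part1 R a b ha hb,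
    fun f g hf hg => TwoParam.part2 f g hf hg, TwoParam.part3⟩
end

section
/- A formal power series f over R of finite total degree in the variables x_{i,j} is a two-parameter quasisymmetric function if and only if zero_{a,k}(f) = f for every axis a ∈ {1,2} and every k ∈ ℕ. -/
open scoped Classical

namespace TwoParam

/-! ### auxiliary -/

def gmap (k n : ℕ) : ℕ := if n < k then n else n + 1

lemma gmap_strictMono (k : ℕ) : StrictMono (gmap k) := by
  intro a b h; unfold gmap; split_ifs <;> omega

def gmaps : List ℕ → ℕ → ℕ
  | [], n => n
  | k :: l, n => gmap k (gmaps l n)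

lemma liftIdx_zero (k : ℕ) (p : ℕ × ℕ) : liftIdx 0 k p = (gmap k p.1, p.2) := by
  simp only [liftIdx, gmap, if_pos rfl]
  split_ifs <;> simp

lemma liftIdx_one (k : ℕ) (p : ℕ × ℕ) : liftIdx 1 k p = (p.1, gmap k p.2) := by
  have h1 : (1 : Fin 2) ≠ 0 := by decide
  simp only [liftIdx, gmap, if_neg h1]
  split_ifs <;> rfl

lemma mapDomain_monomialOf (a : NMat) (ι : Fin a.rows → ℕ) (κ : Fin a.cols → ℕ)
    (g : (ℕ × ℕ) → (ℕ × ℕ)) :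
    Finsupp.mapDomain g (monomialOf a ι κ) =
      ∑ s : Fin a.rows, ∑ t : Fin a.cols,
        Finsupp.single (g (ι s, κ t)) (a.entry s t) := by
  unfold monomialOf
  rw [Finsupp.mapDomain_finset_sum]
  refine Finset.sum_congr rfl fun s _ => ?_
  rw [Finsupp.mapDomain_finset_sum]
  exact Finset.sum_congr rfl fun t _ => Finsupp.mapDomain_single

lemma mapDomain_monomialOf₀ (a : NMat) (ι : Fin a.rows → ℕ) (κ : Fin a.cols → ℕ) (k : ℕ) :
    Finsupp.mapDomain (liftIdx 0 k) (monomialOf a ι κ) =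
      monomialOf a (fun s => gmap k (ι s)) κ := by
  rw [mapDomain_monomialOf]
  unfold monomialOf
  simp [liftIdx_zero]

lemma mapDomain_monomialOf₁ (a : NMat) (ι : Fin a.rows → ℕ) (κ : Fin a.cols → ℕ) (k : ℕ) :
    Finsupp.mapDomain (liftIdx 1 k) (monomialOf a ι κ) =
      monomialOf a ι (fun t => gmap k (κ t)) := by
  rw [mapDomain_monomialOf]
  unfold monomialOf
  simp [liftIdx_one]

lemma strictMono_le {mm : ℕ} {ι : Fin mm → ℕ} (h : StrictMono ι) (s : Fin mm) :
    (s : ℕ) ≤ ι s := by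
  obtain ⟨v, hv⟩ := s
  induction v with
  | zero => exact Nat.zero_le _
  | succ n ih =>
      have h1 : n < mm := Nat.lt_of_succ_lt hv
      have h2 : (⟨n, h1⟩ : Fin mm) < ⟨n + 1, hv⟩ := by simp [Fin.lt_def]
      have h3 := h h2
      have h4 := ih h1
      simp only [Fin.val_mk] at h3 h4 ⊢
      omega

lemma exists_gmaps : ∀ (N mm : ℕ) (ι : Fin mm → ℕ), StrictMono ι →
    (∑ s : Fin mm, (ι s - (s : ℕ))) = N → ∃ l : List ℕ, ∀ s : Fin mm, ι s = gmaps l (s : ℕ) := by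
  intro N
  induction N using Nat.strong_induction_on with
  | _ N IH =>
    intro mm ι hι hN
    by_cases hid : ∀ s : Fin mm, ι s = (s : ℕ)
    · exact ⟨[], fun s => hid s⟩
    · push_neg at hid
      have hne : (Finset.univ.filter (fun s : Fin mm => ι s ≠ (s : ℕ))).Nonempty := by
        obtain ⟨s, hs⟩ := hid
        exact ⟨s, by simp [hs]⟩
      set s₀ := (Finset.univ.filter (fun s : Fin mm => ι s ≠ (s : ℕ))).min' hne with hs₀
      have hs₀mem : ι s₀ ≠ (s₀ : ℕ) := by
        have := (Finset.univ.filter (fun s : Fin mm => ι s ≠ (s : ℕ))).min'_mem hne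
        simpa using this
      have hlt : ∀ s : Fin mm, s < s₀ → ι s = (s : ℕ) := by
        intro s hs
        by_contra h
        exact absurd (Finset.min'_le _ s (Finset.mem_filter.mpr ⟨Finset.mem_univ s, h⟩))
          (not_le.mpr hs)
      have hgt : (s₀ : ℕ) < ι s₀ := lt_of_le_of_ne (strictMono_le hι s₀) (Ne.symm hs₀mem)
      set k := ι s₀ - 1 with hk
      set ι' : Fin mm → ℕ := fun s => if s < s₀ then ι s else ι s - 1 with hι'
      have hι'mono : StrictMono ι' := by
        intro s t hst
        simp only [hι']
        have h1 := hι hst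
        split_ifs with h2 h3 h3
        · exact h1
        · have h4 : ι s₀ ≤ ι t := hι.le_iff_le.mpr (not_lt.mp h3)
          have h5 := hlt s h2
          have h6 : (s : ℕ) < (s₀ : ℕ) := h2
          omega
        · exact absurd (hst.trans h3) h2
        · have h4 : ι s₀ ≤ ι s := hι.le_iff_le.mpr (not_lt.mp h2)
          omega
      have hcomp : ∀ s : Fin mm, ι s = gmap k (ι' s) := by
        intro s
        simp only [hι', gmap]
        split_ifs with h1 h2 h2
        · rfl
        · have := hlt s h1
          have : (s : ℕ) < (s₀ : ℕ) := h1
          omega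
        · have : ι s ≥ ι s₀ := hι.le_iff_le.mpr (not_lt.mp h1)
          omega
        · have : ι s ≥ ι s₀ := hι.le_iff_le.mpr (not_lt.mp h1)
          omega
      have hW : (∑ s : Fin mm, (ι' s - (s : ℕ))) < N := by
        rw [← hN]
        apply Finset.sum_lt_sum
        · intro s _
          simp only [hι']
          split_ifs <;> omega
        · refine ⟨s₀, Finset.mem_univ _, ?_⟩
          simp only [hι', if_neg (lt_irrefl s₀)]
          have := strictMono_le hι s₀
          omega
      obtain ⟨l, hl⟩ := IH _ hW mm ι' hι'mono rfl
      exact ⟨k :: l, fun s => by rw [hcomp s, hl s]; rfl⟩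


lemma monomialOf_apply_self (a : NMat) {ι : Fin a.rows → ℕ} {κ : Fin a.cols → ℕ}
    (hι : Function.Injective ι) (hκ : Function.Injective κ)
    (s : Fin a.rows) (t : Fin a.cols) :
    (monomialOf a ι κ) (ι s, κ t) = a.entry s t := by
  unfold monomialOf
  simp only [Finset.sum_apply', Finsupp.single_apply, Prod.mk.injEq, hι.eq_iff, hκ.eq_iff]
  have h1 : ∀ s' : Fin a.rows,
      (∑ t' : Fin a.cols, if s' = s ∧ t' = t then a.entry s' t' else 0)
        = if s' = s then a.entry s' t else 0 := by
    intro s'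
    by_cases h : s' = s <;> simp [h]
  simp only [h1]
  simp

lemma monomialOf_apply_ne (a : NMat) (ι : Fin a.rows → ℕ) (κ : Fin a.cols → ℕ)
    (p : ℕ × ℕ) (h : ∀ s t, (ι s, κ t) ≠ p) :
    (monomialOf a ι κ) p = 0 := by
  unfold monomialOf
  simp only [Finset.sum_apply', Finsupp.single_apply]
  exact Finset.sum_eq_zero fun s _ => Finset.sum_eq_zero fun t _ => if_neg (h s t)

noncomputable def rowE (m : Mon) : Fin (m.support.image Prod.fst).card → ℕ :=
  fun s => (m.support.image Prod.fst).orderEmbOfFin rfl s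

noncomputable def colE (m : Mon) : Fin (m.support.image Prod.snd).card → ℕ :=
  fun t => (m.support.image Prod.snd).orderEmbOfFin rfl t

noncomputable def stdMat (m : Mon) : NMat where
  rows := (m.support.image Prod.fst).card
  cols := (m.support.image Prod.snd).card
  entry := fun i j =>
    if h : i < (m.support.image Prod.fst).card ∧ j < (m.support.image Prod.snd).card
    then m (rowE m ⟨i, h.1⟩, colE m ⟨j, h.2⟩) else 0
  entry_eq_zero := fun i j h => dif_neg (by omega)

lemma stdMat_rows (m : Mon) : (stdMat m).rows = (m.support.image Prod.fst).card := rfl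
lemma stdMat_cols (m : Mon) : (stdMat m).cols = (m.support.image Prod.snd).card := rfl

lemma stdMat_entry (m : Mon) (s : Fin (stdMat m).rows) (t : Fin (stdMat m).cols) :
    (stdMat m).entry s t = m (rowE m s, colE m t) :=
  dif_pos ⟨s.isLt, t.isLt⟩

lemma rowE_strictMono (m : Mon) : StrictMono (rowE m) :=
  ((m.support.image Prod.fst).orderEmbOfFin rfl).strictMono

lemma colE_strictMono (m : Mon) : StrictMono (colE m) :=
  ((m.support.image Prod.snd).orderEmbOfFin rfl).strictMono

lemma rowE_surj (m : Mon) : ∀ x ∈ m.support.image Prod.fst, ∃ s, rowE m s = x := by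
  intro x hx
  have : x ∈ Set.range ((m.support.image Prod.fst).orderEmbOfFin rfl) := by
    rw [Finset.range_orderEmbOfFin]; exact hx
  exact this

lemma colE_surj (m : Mon) : ∀ y ∈ m.support.image Prod.snd, ∃ t, colE m t = y := by
  intro y hy
  have : y ∈ Set.range ((m.support.image Prod.snd).orderEmbOfFin rfl) := by
    rw [Finset.range_orderEmbOfFin]; exact hy
  exact this

lemma stdMat_isComp (m : Mon) : (stdMat m).IsComp := by
  constructor
  · intro i hi
    have hmem : rowE m ⟨i, hi⟩ ∈ m.support.image Prod.fst :=
      Finset.orderEmbOfFin_mem _ rfl _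
    obtain ⟨p, hp, hp1⟩ := Finset.mem_image.mp hmem
    obtain ⟨t, ht⟩ := colE_surj m p.2 (Finset.mem_image.mpr ⟨p, hp, rfl⟩)
    refine ⟨t, t.isLt, ?_⟩
    rw [show (stdMat m).entry i t = m (rowE m ⟨i, hi⟩, colE m t) from
      stdMat_entry m ⟨i, hi⟩ t]
    rw [ht, ← hp1]
    exact Finsupp.mem_support_iff.mp hp
  · intro j hj
    have hmem : colE m ⟨j, hj⟩ ∈ m.support.image Prod.snd :=
      Finset.orderEmbOfFin_mem _ rfl _
    obtain ⟨p, hp, hp2⟩ := Finset.mem_image.mp hmem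
    obtain ⟨s, hs⟩ := rowE_surj m p.1 (Finset.mem_image.mpr ⟨p, hp, rfl⟩)
    refine ⟨s, s.isLt, ?_⟩
    rw [show (stdMat m).entry s j = m (rowE m s, colE m ⟨j, hj⟩) from
      stdMat_entry m s ⟨j, hj⟩]
    rw [hs, ← hp2]
    exact Finsupp.mem_support_iff.mp hp

lemma stdMat_eq (m : Mon) : m = monomialOf (stdMat m) (rowE m) (colE m) := by
  ext p
  by_cases hex : ∃ s t, (rowE m s, colE m t) = p
  · obtain ⟨s, t, rfl⟩ := hex
    exact ((monomialOf_apply_self (stdMat m) (rowE_strictMono m).injective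
      (colE_strictMono m).injective s t).trans (stdMat_entry m s t)).symm
  · push_neg at hex
    refine Eq.trans ?_ (monomialOf_apply_ne (stdMat m) (rowE m) (colE m) p hex).symm
    by_contra h
    have hp : p ∈ m.support := Finsupp.mem_support_iff.mpr h
    obtain ⟨s, hs⟩ := rowE_surj m p.1 (Finset.mem_image.mpr ⟨p, hp, rfl⟩)
    obtain ⟨t, ht⟩ := colE_surj m p.2 (Finset.mem_image.mpr ⟨p, hp, rfl⟩)
    exact hex s t (by rw [hs, ht])

lemma exists_std (m : Mon) : ∃ (a : NMat) (ι : Fin a.rows → ℕ) (κ : Fin a.cols → ℕ),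
    a.IsComp ∧ StrictMono ι ∧ StrictMono κ ∧ m = monomialOf a ι κ :=
  ⟨stdMat m, rowE m, colE m, stdMat_isComp m, rowE_strictMono m, colE_strictMono m,
    stdMat_eq m⟩


end TwoParam

open TwoParam in
/-- a finite-degree power series is two-parameter
quasisymmetric iff it is fixed by all free zero insertions. -/
theorem statement18 (R : Type*) [CommRing R] [IsDomain R]
    (f : Mon → R) (hf : FinDeg f) :
    IsQSym f ↔ ∀ (a : Fin 2) (k : ℕ), zeroF a k f = f := by
  constructor
  · intro hq ax k
    funext m
    obtain ⟨a, ι, κ, hcomp, hι, hκ, hm⟩ := exists_std m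
    show f (Finsupp.mapDomain (liftIdx ax k) m) = f m
    have hax : ax = 0 ∨ ax = 1 := by
      fin_cases ax
      · exact Or.inl rfl
      · exact Or.inr rfl
    rcases hax with rfl | rfl
    · rw [hm, mapDomain_monomialOf₀,
        hq.2 a hcomp (fun s => gmap k (ι s)) κ (fun _ _ h => gmap_strictMono k (hι h)) hκ,
        ← hq.2 a hcomp ι κ hι hκ]
    · rw [hm, mapDomain_monomialOf₁,
        hq.2 a hcomp ι (fun t => gmap k (κ t)) hι (fun _ _ h => gmap_strictMono k (hκ h)),
        ← hq.2 a hcomp ι κ hι hκ]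
  · intro hz
    refine ⟨hf, ?_⟩
    intro a hcomp ι κ hι hκ
    have key0 : ∀ (l : List ℕ) (ι' : Fin a.rows → ℕ) (κ' : Fin a.cols → ℕ),
        f (monomialOf a (fun s => gmaps l (ι' s)) κ') = f (monomialOf a ι' κ') := by
      intro l
      induction l with
      | nil => intro ι' κ'; rfl
      | cons k l ih =>
        intro ι' κ'
        have h1 : f (Finsupp.mapDomain (liftIdx 0 k)
            (monomialOf a (fun s => gmaps l (ι' s)) κ'))
              = f (monomialOf a (fun s => gmaps l (ι' s)) κ') :=
          congrFun (hz 0 k) _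
        calc f (monomialOf a (fun s => gmaps (k :: l) (ι' s)) κ')
            = f (Finsupp.mapDomain (liftIdx 0 k)
                (monomialOf a (fun s => gmaps l (ι' s)) κ')) := by
              rw [mapDomain_monomialOf₀]; rfl
          _ = f (monomialOf a ι' κ') := h1.trans (ih ι' κ')
    have key1 : ∀ (l : List ℕ) (ι' : Fin a.rows → ℕ) (κ' : Fin a.cols → ℕ),
        f (monomialOf a ι' (fun t => gmaps l (κ' t))) = f (monomialOf a ι' κ') := by
      intro l
      induction l with
      | nil => intro ι' κ'; rfl
      | cons k l ih =>
        intro ι' κ'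
        have h1 : f (Finsupp.mapDomain (liftIdx 1 k)
            (monomialOf a ι' (fun t => gmaps l (κ' t))))
              = f (monomialOf a ι' (fun t => gmaps l (κ' t))) :=
          congrFun (hz 1 k) _
        calc f (monomialOf a ι' (fun t => gmaps (k :: l) (κ' t)))
            = f (Finsupp.mapDomain (liftIdx 1 k)
                (monomialOf a ι' (fun t => gmaps l (κ' t)))) := by
              rw [mapDomain_monomialOf₁]; rfl
          _ = f (monomialOf a ι' κ') := h1.trans (ih ι' κ')
    obtain ⟨l, hl⟩ := exists_gmaps _ a.rows ι hι rfl
    obtain ⟨l', hl'⟩ := exists_gmaps _ a.cols κ hκ rfl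
    calc f (monomialOf a ι κ)
        = f (monomialOf a (fun s => (s : ℕ)) κ) := by
          rw [show ι = fun s : Fin a.rows => gmaps l (s : ℕ) from funext hl]
          exact key0 l _ κ
      _ = f (monomialOf a (fun s => (s : ℕ)) (fun t => (t : ℕ))) := by
          rw [show κ = fun t : Fin a.cols => gmaps l' (t : ℕ) from funext hl']
          exact key1 l' _ _
end
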